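/- arXiv:2106.11519 — 8 statements merged into one kernel-verified Lean document; each statement's English description precedes it below -/
import Mathlib

section
/- Let d ≥ 1 and λ ∈ ℂ^d. For every integer m ≥ 1 and every 1 ≤ k ≤ d, the identity ( Σ_{j=1}^{d} α_{m,j}(λ) ) · e_k(λ) = Σ_{j=k}^{d} (j choose k) · α_{m+k,j}(λ) holds. -/
open Finset

/-- The `k`-th elementary symmetric polynomial of `lam 1, …, lam d`. -/
noncomputable def esymm (d : ℕ) (lam : Fin d → ℂ) (k : ℕ) : ℂ :=
  ∑ S ∈ Finset.powersetCard k (Finset.univ : Finset (Fin d)), ∏ j ∈ S, lam j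

/-- `α_{m,k}(λ)`: the sum over all `y ∈ {0,…,m}^d` with exactly `k` strictly positive
coordinates and total sum `m` of `∏ j, λ_j ^ y_j`. -/
noncomputable def alpha (d : ℕ) (lam : Fin d → ℂ) (m k : ℕ) : ℂ :=
  ∑ y ∈ (Fintype.piFinset fun _ : Fin d => Finset.range (m + 1)).filter
      (fun y => (Finset.univ.filter fun j => 0 < y j).card = k ∧ ∑ j, y j = m),
    ∏ j, lam j ^ y j

/-- The set of `y ∈ {0,…,M}^d` with total sum `M`. -/
noncomputable def comps (d M : ℕ) : Finset (Fin d → ℕ) :=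
  (Fintype.piFinset fun _ : Fin d => Finset.range (M + 1)).filter (fun y => ∑ j, y j = M)

/-- Support of a vector of naturals. -/
noncomputable def supp {d : ℕ} (y : Fin d → ℕ) : Finset (Fin d) :=
  Finset.univ.filter fun j => 0 < y j

lemma mem_comps {d M : ℕ} {y : Fin d → ℕ} :
    y ∈ comps d M ↔ (∀ i, y i ≤ M) ∧ ∑ i, y i = M := by
  simp [comps, Fintype.mem_piFinset, Nat.lt_succ_iff]

lemma supp_card_mem {d M : ℕ} (hM : 1 ≤ M) {y : Fin d → ℕ} (hy : y ∈ comps d M) :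
    (supp y).card ∈ Finset.Icc 1 d := by
  rw [mem_comps] at hy
  rw [Finset.mem_Icc]
  constructor
  · rw [Nat.one_le_iff_ne_zero]
    intro h0
    rw [Finset.card_eq_zero] at h0
    have : ∀ i, y i = 0 := by
      intro i
      by_contra hne
      have : i ∈ supp y := by simp [supp, Nat.pos_of_ne_zero hne]
      simp [h0] at this
    simp [this] at hy
    omega
  · exact le_trans (Finset.card_le_card (Finset.subset_univ _)) (by simp)

lemma alpha_eq_sum_filter (d : ℕ) (lam : Fin d → ℂ) (M j : ℕ) :
    alpha d lam M j = ∑ y ∈ (comps d M).filter (fun y => (supp y).card = j),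
      ∏ i, lam i ^ y i := by
  rw [alpha, comps, Finset.filter_filter]
  refine Finset.sum_congr ?_ fun _ _ => rfl
  refine Finset.filter_congr fun y _ => ?_
  simp only [supp]
  tauto

lemma sum_alpha (d : ℕ) (lam : Fin d → ℂ) (M : ℕ) (hM : 1 ≤ M) :
    ∑ j ∈ Finset.Icc 1 d, alpha d lam M j = ∑ y ∈ comps d M, ∏ i, lam i ^ y i := by
  simp_rw [alpha_eq_sum_filter]
  exact Finset.sum_fiberwise_of_maps_to (fun y hy => supp_card_mem hM hy) _

/-- Lemma B.3: combinatorial identity between the coefficients `α_{m,k}`. -/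
theorem alpha_recursive_relation (d : ℕ) (hd : 1 ≤ d) (lam : Fin d → ℂ)
    (m k : ℕ) (hm : 1 ≤ m) (hk1 : 1 ≤ k) (hkd : k ≤ d) :
    (∑ j ∈ Finset.Icc 1 d, alpha d lam m j) * esymm d lam k =
      ∑ j ∈ Finset.Icc k d, (j.choose k : ℂ) * alpha d lam (m + k) j := by
  classical
  -- Step 1: rewrite the RHS as a single sum over `comps d (m+k)`.
  have hmk : 1 ≤ m + k := le_trans hm (Nat.le_add_right m k)
  have hsub : Finset.Icc k d ⊆ Finset.Icc 1 d := Finset.Icc_subset_Icc hk1 le_rfl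
  have hRHS : ∑ j ∈ Finset.Icc k d, (j.choose k : ℂ) * alpha d lam (m + k) j
      = ∑ z ∈ comps d (m + k), (((supp z).card.choose k : ℕ) : ℂ) * ∏ i, lam i ^ z i := by
    have hext : ∑ j ∈ Finset.Icc k d, (j.choose k : ℂ) * alpha d lam (m + k) j
        = ∑ j ∈ Finset.Icc 1 d, (j.choose k : ℂ) * alpha d lam (m + k) j := by
      refine Finset.sum_subset hsub ?_
      intro x hx hx'
      simp only [Finset.mem_Icc] at hx hx'
      have : x < k := by omega
      rw [Nat.choose_eq_zero_of_lt this]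
      simp
    rw [hext]
    simp_rw [alpha_eq_sum_filter]
    calc ∑ j ∈ Finset.Icc 1 d, (j.choose k : ℂ) *
          ∑ y ∈ (comps d (m + k)).filter (fun y => (supp y).card = j), ∏ i, lam i ^ y i
        = ∑ j ∈ Finset.Icc 1 d, ∑ y ∈ (comps d (m + k)).filter (fun y => (supp y).card = j),
            (((supp y).card.choose k : ℕ) : ℂ) * ∏ i, lam i ^ y i := by
          refine Finset.sum_congr rfl fun j hj => ?_
          rw [Finset.mul_sum]
          refine Finset.sum_congr rfl fun y hy => ?_
          simp only [Finset.mem_filter] at hy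
          rw [hy.2]
      _ = _ := Finset.sum_fiberwise_of_maps_to (fun y hy => supp_card_mem hmk hy) _
  rw [hRHS, sum_alpha d lam m hm]
  -- Step 2: rewrite choose as a sum over subsets.
  have hz : ∀ z ∈ comps d (m + k), (((supp z).card.choose k : ℕ) : ℂ) * ∏ i, lam i ^ z i
      = ∑ S ∈ Finset.powersetCard k (Finset.univ : Finset (Fin d)),
          if S ⊆ supp z then ∏ i, lam i ^ z i else 0 := by
    intro z _
    rw [← Finset.sum_filter]
    have hset : (Finset.powersetCard k (Finset.univ : Finset (Fin d))).filter
        (fun S => S ⊆ supp z) = Finset.powersetCard k (supp z) := by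
      ext S
      simp only [Finset.mem_filter, Finset.mem_powersetCard, Finset.subset_univ, true_and]
      tauto
    rw [hset, Finset.sum_const, Finset.card_powersetCard, nsmul_eq_mul]
  rw [Finset.sum_congr rfl hz, esymm, Finset.sum_mul_sum]
  rw [← Finset.sum_product', ← Finset.sum_product', ← Finset.sum_filter]
  -- Step 3: bijection (y, S) ↦ (y + 1_S, S).
  refine Finset.sum_bij'
    (fun p _ => ((fun i => p.1 i + if i ∈ p.2 then 1 else 0), p.2))
    (fun p _ => ((fun i => p.1 i - if i ∈ p.2 then 1 else 0), p.2))
    ?_ ?_ ?_ ?_ ?_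
  · -- maps into target
    rintro ⟨y, S⟩ hp
    simp only [Finset.mem_product, mem_comps, Finset.mem_powersetCard, Finset.mem_filter,
      Finset.subset_univ, true_and] at hp ⊢
    obtain ⟨⟨hyle, hysum⟩, hScard⟩ := hp
    have hsum' : ∑ i, (y i + if i ∈ S then 1 else 0) = m + k := by
      rw [Finset.sum_add_distrib, hysum]
      congr 1
      rw [Finset.sum_ite_mem, Finset.univ_inter, Finset.sum_const, smul_eq_mul, mul_one]
      exact hScard
    refine ⟨⟨⟨fun i => ?_, hsum'⟩, hScard⟩, ?_⟩
    · have := hyle i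
      split <;> omega
    · intro i hi
      simp only [supp, Finset.mem_filter, Finset.mem_univ, true_and]
      simp [hi]
  · -- inverse maps back
    rintro ⟨z, S⟩ hp
    simp only [Finset.mem_product, mem_comps, Finset.mem_powersetCard, Finset.mem_filter,
      Finset.subset_univ, true_and] at hp ⊢
    obtain ⟨⟨⟨hzle, hzsum⟩, hScard⟩, hSsupp⟩ := hp
    have hind : ∀ i, (if i ∈ S then 1 else 0) ≤ z i := by
      intro i
      split
      · rename_i hi
        have := hSsupp hi
        simp only [supp, Finset.mem_filter, Finset.mem_univ, true_and] at this
        omega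
      · omega
    have hsum' : ∑ i, (z i - if i ∈ S then 1 else 0) = m := by
      rw [Finset.sum_tsub_distrib _ (fun i _ => hind i), hzsum]
      have : ∑ i, (if i ∈ S then 1 else 0) = k := by
        rw [Finset.sum_ite_mem, Finset.univ_inter, Finset.sum_const, smul_eq_mul, mul_one]
        exact hScard
      omega
    refine ⟨⟨fun i => ?_, hsum'⟩, hScard⟩
    calc z i - (if i ∈ S then 1 else 0)
        ≤ ∑ j, (z j - if j ∈ S then 1 else 0) :=
          Finset.single_le_sum (f := fun j => z j - if j ∈ S then 1 else 0)
            (fun j _ => Nat.zero_le _) (Finset.mem_univ i)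
      _ = m := hsum'
  · -- left inverse
    rintro ⟨y, S⟩ _
    refine Prod.ext ?_ rfl
    funext i
    simp
  · -- right inverse
    rintro ⟨z, S⟩ hp
    simp only [Finset.mem_product, mem_comps, Finset.mem_powersetCard, Finset.mem_filter,
      Finset.subset_univ, true_and] at hp
    obtain ⟨⟨⟨hzle, hzsum⟩, hScard⟩, hSsupp⟩ := hp
    refine Prod.ext ?_ rfl
    funext i
    dsimp only
    split
    · rename_i hi
      have := hSsupp hi
      simp only [supp, Finset.mem_filter, Finset.mem_univ, true_and] at this
      omega
    · omega
  · -- values agree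
    rintro ⟨y, S⟩ _
    dsimp only
    simp_rw [pow_add]
    rw [Finset.prod_mul_distrib]
    congr 1
    have : ∀ i : Fin d, lam i ^ (if i ∈ S then 1 else 0) = if i ∈ S then lam i else 1 := by
      intro i; split <;> simp
    simp_rw [this]
    rw [Finset.prod_ite_mem, Finset.univ_inter]
end

section
/- Let d ≥ 1, m ≥ 0 and 1 ≤ k ≤ min{d, m} be integers, and let λ ∈ ℂ^d satisfy |λ_j| ≤ 1 for every j ∈ {1,…,d}. Then |α_{m,k}(λ)| ≤ (4e·max{m, d}/d)^d. Moreover, for k = m ≤ d one has |α_k(λ)| = |α_{k,k}(λ)| ≤ 4^d. -/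
open Finset

/-- The multiset associated to a tuple: `j` appears `y j` times. -/
noncomputable def tupleMultiset (d : ℕ) (y : Fin d → ℕ) : Multiset (Fin d) :=
  ∑ j : Fin d, (y j) • ({j} : Multiset (Fin d))

lemma count_tupleMultiset (d : ℕ) (y : Fin d → ℕ) (i : Fin d) :
    Multiset.count i (tupleMultiset d y) = y i := by
  rw [tupleMultiset, Multiset.count_sum']
  simp [Multiset.count_nsmul, Multiset.count_singleton]

lemma card_tupleMultiset (d : ℕ) (y : Fin d → ℕ) :
    Multiset.card (tupleMultiset d y) = ∑ j, y j := by
  rw [tupleMultiset, Multiset.card_sum]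
  simp [Multiset.card_nsmul]

/-- The number of terms in `alpha` is at most `(d + m - 1).choose m`. -/
lemma alpha_card_le (d m k : ℕ) :
    ((Fintype.piFinset fun _ : Fin d => Finset.range (m + 1)).filter
      (fun y => (Finset.univ.filter fun j => 0 < y j).card = k ∧ ∑ j, y j = m)).card
      ≤ (d + m - 1).choose m := by
  classical
  set S := (Fintype.piFinset fun _ : Fin d => Finset.range (m + 1)).filter
      (fun y => (Finset.univ.filter fun j => 0 < y j).card = k ∧ ∑ j, y j = m) with hS
  have hcard : S.card = Fintype.card {y // y ∈ S} := (Fintype.card_coe S).symm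
  rw [hcard]
  have hle : Fintype.card {y // y ∈ S} ≤ Fintype.card (Sym (Fin d) m) := by
    apply Fintype.card_le_of_injective
      (fun y => ⟨tupleMultiset d y.1, by
        rw [card_tupleMultiset]
        exact ((Finset.mem_filter.mp y.2).2).2⟩)
    intro a b hab
    have h : tupleMultiset d a.1 = tupleMultiset d b.1 := congrArg Sym.toMultiset hab
    apply Subtype.ext
    funext i
    have := congrArg (Multiset.count i) h
    rwa [count_tupleMultiset, count_tupleMultiset] at this
  calc Fintype.card {y // y ∈ S} ≤ Fintype.card (Sym (Fin d) m) := hle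
    _ = (Fintype.card (Fin d) + m - 1).choose m := Sym.card_sym_eq_choose m
    _ = (d + m - 1).choose m := by rw [Fintype.card_fin]

/-- Each term of `alpha` has absolute value at most `1`, so `|alpha| ≤ #terms`. -/
lemma abs_alpha_le_card (d m k : ℕ) (lam : Fin d → ℂ) (hlam : ∀ j, ‖lam j‖ ≤ 1) :
    ‖alpha d lam m k‖ ≤
      (((Fintype.piFinset fun _ : Fin d => Finset.range (m + 1)).filter
        (fun y => (Finset.univ.filter fun j => 0 < y j).card = k ∧ ∑ j, y j = m)).card : ℝ) := by
  classical
  set S := (Fintype.piFinset fun _ : Fin d => Finset.range (m + 1)).filter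
      (fun y => (Finset.univ.filter fun j => 0 < y j).card = k ∧ ∑ j, y j = m) with hS
  have hterm : ∀ y : Fin d → ℕ, ‖∏ j, lam j ^ y j‖ ≤ 1 := by
    intro y
    rw [norm_prod]
    apply Finset.prod_le_one
    · intro j _; positivity
    · intro j _
      rw [norm_pow]
      exact pow_le_one₀ (norm_nonneg _) (hlam j)
  calc ‖alpha d lam m k‖
      ≤ ∑ y ∈ S, ‖∏ j, lam j ^ y j‖ := norm_sum_le _ _
    _ ≤ ∑ _y ∈ S, (1:ℝ) := Finset.sum_le_sum fun y _ => hterm y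
    _ = (S.card : ℝ) := by simp

/-- `n.choose r ≤ (e n / r)^r` for `r ≥ 1`. -/
lemma choose_le_exp_pow (n r : ℕ) (hr : 1 ≤ r) :
    (n.choose r : ℝ) ≤ (Real.exp 1 * n / r) ^ r := by
  have hrR : (0:ℝ) < r := by exact_mod_cast hr
  have hfac : (0:ℝ) < r.factorial := by exact_mod_cast r.factorial_pos
  have key : (r:ℝ) ^ r ≤ Real.exp 1 ^ r * r.factorial := by
    have h1 : (r:ℝ) ^ r / r.factorial ≤ Real.exp r := by
      refine le_trans ?_ (Real.sum_le_exp_of_nonneg (x := (r:ℝ)) hrR.le (r + 1))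
      exact Finset.single_le_sum (f := fun i => (r:ℝ) ^ i / i.factorial)
        (fun i _ => by positivity) (Finset.self_mem_range_succ r)
    rw [Real.exp_one_pow]
    calc (r:ℝ) ^ r = ((r:ℝ) ^ r / r.factorial) * r.factorial := by field_simp
      _ ≤ Real.exp r * r.factorial := mul_le_mul_of_nonneg_right h1 hfac.le
  have h2 : (n.choose r : ℝ) ≤ (n:ℝ) ^ r / r.factorial := Nat.choose_le_pow_div r n
  refine h2.trans ?_
  rw [div_pow, mul_pow]
  rw [div_le_div_iff₀ hfac (by positivity)]
  calc (n:ℝ) ^ r * (r:ℝ) ^ r ≤ (n:ℝ) ^ r * (Real.exp 1 ^ r * r.factorial) :=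
        mul_le_mul_of_nonneg_left key (by positivity)
    _ = Real.exp 1 ^ r * (n:ℝ) ^ r * r.factorial := by ring

/-- Lemma B.4: bound on the coefficients `α_{m,k}(λ)` when all `|λ_j| ≤ 1`. -/
theorem alpha_independent_bound (d m k : ℕ) (hd : 1 ≤ d) (hk1 : 1 ≤ k)
    (hk : k ≤ min d m) (lam : Fin d → ℂ) (hlam : ∀ j, ‖lam j‖ ≤ 1) :
    ‖alpha d lam m k‖ ≤ (4 * Real.exp 1 * (max m d : ℝ) / (d : ℝ)) ^ d ∧
      (k = m → ‖alpha d lam m k‖ ≤ 4 ^ d) := by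
  have hdR : (0:ℝ) < d := by exact_mod_cast hd
  have habs : ‖alpha d lam m k‖ ≤ ((d + m - 1).choose m : ℝ) :=
    (abs_alpha_le_card d m k lam hlam).trans (by exact_mod_cast alpha_card_le d m k)
  constructor
  · have h1 : (d + m - 1).choose m ≤ (d + m).choose m :=
      Nat.choose_le_choose m (Nat.sub_le _ _)
    have h2 : (d + m).choose m = (d + m).choose d := by
      have := Nat.choose_symm (n := d + m) (k := m) (Nat.le_add_left m d)
      rw [Nat.add_sub_cancel] at this
      exact this.symm
    have h3 : ((d + m).choose d : ℝ) ≤ (Real.exp 1 * (d + m) / d) ^ d := by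
      have := choose_le_exp_pow (d + m) d hd
      exact_mod_cast this
    have h4 : (Real.exp 1 * (d + m) / d) ^ d ≤ (4 * Real.exp 1 * (max m d : ℝ) / d) ^ d := by
      apply pow_le_pow_left₀ (by positivity)
      apply div_le_div_of_nonneg_right ?_ hdR.le
      have hm1 : (m:ℝ) ≤ (max m d : ℝ) := by exact_mod_cast le_max_left m d
      have hm2 : (d:ℝ) ≤ (max m d : ℝ) := by exact_mod_cast le_max_right m d
      have he : (0:ℝ) < Real.exp 1 := Real.exp_pos 1
      nlinarith
    calc ‖alpha d lam m k‖ ≤ ((d + m - 1).choose m : ℝ) := habs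
      _ ≤ ((d + m).choose d : ℝ) := by exact_mod_cast h2 ▸ h1
      _ ≤ (Real.exp 1 * (d + m) / d) ^ d := h3
      _ ≤ _ := h4
  · intro hkm
    have hmd : m ≤ d := hkm ▸ (le_min_iff.mp hk).1
    have h1 : (d + m - 1).choose m ≤ 2 ^ (d + m - 1) := by
      have hmem : m ∈ Finset.range (d + m - 1 + 1) := by
        apply Finset.mem_range.mpr; omega
      calc (d + m - 1).choose m
          ≤ ∑ i ∈ Finset.range (d + m - 1 + 1), (d + m - 1).choose i :=
            Finset.single_le_sum (f := fun i => (d + m - 1).choose i)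
              (fun i _ => Nat.zero_le _) hmem
        _ = 2 ^ (d + m - 1) := Nat.sum_range_choose _
    have h2 : (2:ℕ) ^ (d + m - 1) ≤ 4 ^ d := by
      calc (2:ℕ) ^ (d + m - 1) ≤ 2 ^ (2 * d) := Nat.pow_le_pow_right (by norm_num) (by omega)
        _ = 4 ^ d := by rw [pow_mul]; norm_num
    calc ‖alpha d lam m k‖ ≤ ((d + m - 1).choose m : ℝ) := habs
      _ ≤ ((4:ℕ) ^ d : ℝ) := by exact_mod_cast h1.trans h2
      _ = 4 ^ d := by norm_num
end

section
/- Let d ≥ 1, m ≥ 0 and 1 ≤ k ≤ d be integers, and let λ ∈ ℂ^d satisfy |λ_j| ≤ 1 for every j ∈ {1,…,d}. Then |β_{m,k}(λ)| ≤ (8e·max{m+k, d}/d)^d. -/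
open Finset

/-- `β_{m,k}(λ)`, defined by `β_{0,k} = e_k(λ)` and
`β_{m,k} = β_{m−1,1}·e_k(λ) − β_{m−1,k+1}` (the convention `β_{m−1,d+1} = 0` is
automatic since `esymm d lam k = 0` for `k > d`, so `β_{m,k} = 0` for `k > d`). -/
noncomputable def betaC (d : ℕ) (lam : Fin d → ℂ) : ℕ → ℕ → ℂ
  | 0, k => esymm d lam k
  | m + 1, k => betaC d lam m 1 * esymm d lam k - betaC d lam m (k + 1)

section BetaAux
open PowerSeries

lemma one_sub_mul_geom (a : ℂ) :
    (1 - PowerSeries.C a * PowerSeries.X) * PowerSeries.mk (fun t => a ^ t) = 1 := by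
  ext n
  cases n with
  | zero =>
    simp [PowerSeries.coeff_zero_eq_constantCoeff, map_mul, map_sub, PowerSeries.constantCoeff_mk]
  | succ n =>
    rw [sub_mul, one_mul, mul_assoc]
    simp [PowerSeries.coeff_mk, PowerSeries.coeff_succ_X_mul, pow_succ, mul_comm,
      PowerSeries.coeff_one]

lemma coeff_prod_one_sub {d : ℕ} (lam : Fin d → ℂ) (s : Finset (Fin d)) (n : ℕ) :
    PowerSeries.coeff n (∏ j ∈ s, (1 - PowerSeries.C (lam j) * PowerSeries.X)) =
      (-1) ^ n * ∑ S ∈ powersetCard n s, ∏ j ∈ S, lam j := by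
  induction s using Finset.induction_on generalizing n with
  | empty =>
    cases n with
    | zero => simp
    | succ n =>
      rw [Finset.prod_empty, Finset.powersetCard_eq_empty.2 (by simp)]
      simp [PowerSeries.coeff_one]
  | @insert x s hx ih =>
    rw [Finset.prod_insert hx, sub_mul, one_mul, mul_assoc]
    cases n with
    | zero =>
      simp [Finset.powersetCard_zero]
    | succ n =>
      rw [map_sub, PowerSeries.coeff_C_mul, PowerSeries.coeff_succ_X_mul, ih, ih,
        Finset.powersetCard_succ_insert hx]
      rw [Finset.sum_union, Finset.sum_image]
      · have h1 : ∀ S ∈ powersetCard n s, ∏ j ∈ insert x S, lam j = lam x * ∏ j ∈ S, lam j := by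
          intro S hS
          rw [Finset.mem_powersetCard] at hS
          exact Finset.prod_insert (fun hxS => hx (hS.1 hxS))
        rw [Finset.sum_congr rfl h1, ← Finset.mul_sum]
        ring
      · intro S hS T hT hST
        rw [Finset.mem_coe, Finset.mem_powersetCard] at hS hT
        have hxS : x ∉ S := fun h => hx (hS.1 h)
        have hxT : x ∉ T := fun h => hx (hT.1 h)
        rw [← Finset.erase_insert hxS, ← Finset.erase_insert hxT, hST]
      · rw [Finset.disjoint_right]
        intro S hS hS'
        rw [Finset.mem_image] at hS
        obtain ⟨T, _, rfl⟩ := hS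
        rw [Finset.mem_powersetCard] at hS'
        exact hx (hS'.1 (Finset.mem_insert_self x T))

lemma hockey (c : ℕ) : ∀ n : ℕ, ∑ b ∈ range (n + 1), ((b + c - 1).choose b) = (n + c).choose n := by
  intro n
  induction n with
  | zero => simp
  | succ n ih =>
    rw [Finset.sum_range_succ, ih]
    have h1 : n + 1 + c - 1 = n + c := by omega
    rw [h1, ← Nat.choose_succ_succ (n + c) n]
    congr 1
    omega

lemma abs_coeff_prod_geom {d : ℕ} (lam : Fin d → ℂ) (hlam : ∀ j, ‖lam j‖ ≤ 1)
    (s : Finset (Fin d)) (n : ℕ) :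
    ‖PowerSeries.coeff n (∏ j ∈ s, PowerSeries.mk fun t => lam j ^ t)‖ ≤
      ((n + s.card - 1).choose n : ℝ) := by
  induction s using Finset.induction_on generalizing n with
  | empty =>
    cases n with
    | zero => simp
    | succ n => simp [PowerSeries.coeff_one]
  | @insert x s hx ih =>
    rw [Finset.prod_insert hx, PowerSeries.coeff_mul]
    calc ‖∑ p ∈ Finset.HasAntidiagonal.antidiagonal n,
          PowerSeries.coeff p.1 (PowerSeries.mk fun t => lam x ^ t) *
          PowerSeries.coeff p.2 (∏ j ∈ s, PowerSeries.mk fun t => lam j ^ t)‖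
        ≤ ∑ p ∈ Finset.HasAntidiagonal.antidiagonal n, ‖PowerSeries.coeff p.1
            (PowerSeries.mk fun t => lam x ^ t) *
            PowerSeries.coeff p.2 (∏ j ∈ s, PowerSeries.mk fun t => lam j ^ t)‖ :=
          norm_sum_le _ _
      _ ≤ ∑ p ∈ Finset.HasAntidiagonal.antidiagonal n, (((p.2 + s.card - 1).choose p.2 : ℝ)) := by
          apply Finset.sum_le_sum
          intro p hp
          rw [norm_mul, PowerSeries.coeff_mk]
          have h1 : ‖lam x ^ p.1‖ ≤ 1 := by
            rw [norm_pow]; exact pow_le_one₀ (norm_nonneg _) (hlam x)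
          calc ‖lam x ^ p.1‖ * ‖_‖ ≤ 1 * ((p.2 + s.card - 1).choose p.2 : ℝ) :=
                mul_le_mul h1 (ih p.2) (norm_nonneg _) zero_le_one
            _ = _ := one_mul _
      _ = ∑ i ∈ range (n + 1), (((n - i) + s.card - 1).choose (n - i) : ℝ) := by
          rw [Finset.Nat.sum_antidiagonal_eq_sum_range_succ_mk]
      _ = ∑ i ∈ range (n + 1), ((i + s.card - 1).choose i : ℝ) := by
          rw [← Finset.sum_range_reflect]
          apply Finset.sum_congr rfl
          intro i hi
          rw [Finset.mem_range] at hi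
          congr 2 <;> omega
      _ = (((n + (insert x s).card - 1).choose n : ℝ)) := by
          rw [← Nat.cast_sum, hockey s.card n, Finset.card_insert_of_notMem hx]
          norm_num


noncomputable def HS (d : ℕ) (lam : Fin d → ℂ) : PowerSeries ℂ :=
  ∏ j : Fin d, PowerSeries.mk fun t => lam j ^ t

noncomputable def hh (d : ℕ) (lam : Fin d → ℂ) (n : ℕ) : ℂ :=
  PowerSeries.coeff n (HS d lam)

noncomputable def FS (d : ℕ) (lam : Fin d → ℂ) : PowerSeries ℂ :=
  ∏ j : Fin d, (1 - PowerSeries.C (lam j) * PowerSeries.X)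

lemma FS_mul_HS (d : ℕ) (lam : Fin d → ℂ) : FS d lam * HS d lam = 1 := by
  rw [FS, HS, ← Finset.prod_mul_distrib]
  exact Finset.prod_eq_one fun j _ => one_sub_mul_geom (lam j)

lemma coeff_FS (d : ℕ) (lam : Fin d → ℂ) (n : ℕ) :
    PowerSeries.coeff n (FS d lam) = (-1) ^ n * esymm d lam n :=
  coeff_prod_one_sub lam Finset.univ n

lemma esymm_zero (d : ℕ) (lam : Fin d → ℂ) : esymm d lam 0 = 1 := by
  simp [esymm, Finset.powersetCard_zero]

lemma newton (d : ℕ) (lam : Fin d → ℂ) (m : ℕ) :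
    hh d lam (m + 1) = ∑ i ∈ range (m + 1), (-1) ^ i * esymm d lam (1 + i) * hh d lam (m - i) := by
  have h0 : PowerSeries.coeff (m + 1) (FS d lam * HS d lam) = 0 := by
    rw [FS_mul_HS]; simp [PowerSeries.coeff_one]
  rw [PowerSeries.coeff_mul, Finset.Nat.sum_antidiagonal_eq_sum_range_succ_mk,
    Finset.sum_range_succ'] at h0
  -- h0 : ∑ i ∈ range (m+1), coeff (i+1) FS * coeff (m+1-(i+1)) HS + coeff 0 FS * coeff (m+1) HS = 0
  have h1 : PowerSeries.coeff 0 (FS d lam) = 1 := by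
    rw [coeff_FS, esymm_zero]; simp
  rw [h1] at h0
  simp only [Nat.sub_zero] at h0
  have h2 : hh d lam (m + 1) = -∑ i ∈ range (m + 1),
      PowerSeries.coeff (i + 1) (FS d lam) * PowerSeries.coeff (m + 1 - (i + 1)) (HS d lam) := by
    rw [hh]; linear_combination h0
  rw [h2, ← Finset.sum_neg_distrib]
  apply Finset.sum_congr rfl
  intro i hi
  rw [coeff_FS, Nat.succ_sub_succ]
  rw [show PowerSeries.coeff (m - i) (HS d lam) = hh d lam (m - i) from rfl]
  rw [pow_succ]
  ring

lemma beta_eq (d : ℕ) (lam : Fin d → ℂ) (m : ℕ) : ∀ k : ℕ,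
    betaC d lam m k = ∑ i ∈ range (m + 1), (-1) ^ i * esymm d lam (k + i) * hh d lam (m - i) := by
  induction m with
  | zero =>
    intro k
    have : hh d lam 0 = 1 := by
      rw [hh, HS, PowerSeries.coeff_zero_eq_constantCoeff_apply, map_prod]
      exact Finset.prod_eq_one fun j _ => by rw [PowerSeries.constantCoeff_mk]; simp
    simp [betaC, this]
  | succ m ih =>
    intro k
    have key : betaC d lam (m + 1) k =
        esymm d lam k * hh d lam (m + 1) -
          ∑ i ∈ range (m + 1), (-1) ^ i * esymm d lam (k + 1 + i) * hh d lam (m - i) := by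
      rw [show betaC d lam (m + 1) k =
          betaC d lam m 1 * esymm d lam k - betaC d lam m (k + 1) from rfl, ih 1, ih (k + 1),
        Finset.sum_mul, newton d lam m, Finset.mul_sum]
      congr 1
      apply Finset.sum_congr rfl
      intro i hi
      ring
    rw [key, Finset.sum_range_succ'
      (fun i => (-1 : ℂ) ^ i * esymm d lam (k + i) * hh d lam (m + 1 - i)) (m + 1)]
    have h0 : (-1 : ℂ) ^ 0 * esymm d lam (k + 0) * hh d lam (m + 1 - 0) =
        esymm d lam k * hh d lam (m + 1) := by simp
    rw [h0]
    have h1 : ∀ i ∈ range (m + 1), (-1 : ℂ) ^ (i + 1) * esymm d lam (k + (i + 1)) *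
        hh d lam (m + 1 - (i + 1)) = -((-1) ^ i * esymm d lam (k + 1 + i) * hh d lam (m - i)) := by
      intro i hi
      rw [Nat.succ_sub_succ, show k + (i + 1) = k + 1 + i by omega, pow_succ]
      ring
    rw [Finset.sum_congr rfl h1, Finset.sum_neg_distrib]
    ring

end BetaAux

lemma abs_esymm' (d : ℕ) (lam : Fin d → ℂ) (hlam : ∀ j, ‖lam j‖ ≤ 1) (k : ℕ) :
    ‖∑ S ∈ Finset.powersetCard k (Finset.univ : Finset (Fin d)), ∏ j ∈ S, lam j‖
      ≤ (d.choose k : ℝ) := by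
  calc ‖∑ S ∈ powersetCard k (univ : Finset (Fin d)), ∏ j ∈ S, lam j‖
      ≤ ∑ S ∈ powersetCard k (univ : Finset (Fin d)), ‖∏ j ∈ S, lam j‖ :=
        norm_sum_le _ _
    _ ≤ ∑ _S ∈ powersetCard k (univ : Finset (Fin d)), (1 : ℝ) :=
        Finset.sum_le_sum fun S _ => by
          rw [norm_prod]
          exact Finset.prod_le_one (fun j _ => norm_nonneg _) (fun j _ => hlam j)
    _ = ((powersetCard k (univ : Finset (Fin d))).card : ℝ) := by simp
    _ = (d.choose k : ℝ) := by rw [Finset.card_powersetCard]; simp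

lemma sum_choose_le (d k m : ℕ) : ∑ i ∈ range (m + 1), d.choose (k + i) ≤ 2 ^ d := by
  have h1 : ∑ i ∈ range (m + 1), d.choose (k + i)
      = ∑ t ∈ (range (m + 1)).image (fun i => k + i), d.choose t := by
    rw [Finset.sum_image]
    intro a _ b _ h
    simp only at h
    omega
  rw [h1, ← Nat.sum_range_choose d]
  calc ∑ t ∈ (range (m + 1)).image (fun i => k + i), d.choose t
      ≤ ∑ t ∈ (range (m + 1)).image (fun i => k + i) ∪ range (d + 1), d.choose t :=
        Finset.sum_le_sum_of_subset Finset.subset_union_left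
    _ = ∑ t ∈ range (d + 1), d.choose t := by
        symm
        apply Finset.sum_subset Finset.subset_union_right
        intro x _ hnx
        rw [Finset.mem_range, not_lt] at hnx
        exact Nat.choose_eq_zero_of_lt (by omega)

lemma pow_le_exp_factorial : ∀ d : ℕ, (d : ℝ) ^ d ≤ Real.exp 1 ^ d * (d.factorial : ℝ) := by
  intro d
  induction d with
  | zero => simp
  | succ d ih =>
    rcases Nat.eq_zero_or_pos d with rfl | hd
    · simpa using Real.one_le_exp zero_le_one
    have hdpos : (0 : ℝ) < d := by exact_mod_cast hd
    have h1 : ((d : ℝ) + 1) ≤ d * Real.exp (1 / d) := by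
      have h2 := Real.add_one_le_exp (1 / d : ℝ)
      have h3 : (d : ℝ) * (1 / d) = 1 := by field_simp
      nlinarith
    have h4 : ((d : ℝ) + 1) ^ d ≤ (d * Real.exp (1 / d)) ^ d :=
      pow_le_pow_left₀ (by positivity) h1 d
    have h5 : (Real.exp (1 / d)) ^ d = Real.exp 1 := by
      rw [← Real.exp_nat_mul]
      congr 1
      field_simp
    have h6 : ((d : ℝ) + 1) ^ d ≤ Real.exp 1 * (d : ℝ) ^ d := by
      rw [mul_pow, h5] at h4
      nlinarith [Real.exp_pos 1]
    have key : ((d : ℕ) + 1 : ℝ) ^ (d + 1) = ((d : ℝ) + 1) ^ d * ((d : ℝ) + 1) := by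
      push_cast
      ring
    calc ((d + 1 : ℕ) : ℝ) ^ (d + 1) = ((d : ℝ) + 1) ^ d * ((d : ℝ) + 1) := by push_cast; ring
      _ ≤ (Real.exp 1 * (d : ℝ) ^ d) * ((d : ℝ) + 1) := by
          apply mul_le_mul_of_nonneg_right h6 (by positivity)
      _ ≤ (Real.exp 1 * (Real.exp 1 ^ d * (d.factorial : ℝ))) * ((d : ℝ) + 1) := by
          apply mul_le_mul_of_nonneg_right _ (by positivity)
          exact mul_le_mul_of_nonneg_left ih (le_of_lt (Real.exp_pos 1))
      _ = Real.exp 1 ^ (d + 1) * (((d + 1) : ℕ).factorial : ℝ) := by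
          rw [Nat.factorial_succ]
          push_cast
          ring

/-- Lemma B.7: bound on the coefficients `β_{m,k}(λ)` when all `|λ_j| ≤ 1`. -/
theorem beta_bound (d m k : ℕ) (hd : 1 ≤ d) (hk1 : 1 ≤ k) (hkd : k ≤ d)
    (lam : Fin d → ℂ) (hlam : ∀ j, ‖lam j‖ ≤ 1) :
    ‖betaC d lam m k‖ ≤
      (8 * Real.exp 1 * (max (m + k) d : ℝ) / (d : ℝ)) ^ d := by
  have hdpos : (0 : ℝ) < d := by exact_mod_cast hd
  -- Step 1: |β| ≤ 2^d * C(m+d, d)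
  have step1 : ‖betaC d lam m k‖ ≤ (2 ^ d * (m + d).choose d : ℕ) := by
    rw [beta_eq d lam m k]
    have hterm : ∀ i ∈ range (m + 1),
        ‖(-1) ^ i * esymm d lam (k + i) * hh d lam (m - i)‖ ≤
          (d.choose (k + i) : ℝ) * ((m + d - 1).choose (d - 1) : ℝ) := by
      intro i hi
      rw [norm_mul, norm_mul, norm_pow]
      simp only [norm_neg, norm_one, one_pow, one_mul]
      have he : ‖esymm d lam (k + i)‖ ≤ (d.choose (k + i) : ℝ) :=
        abs_esymm' d lam hlam (k + i)
      have hh1 : ‖hh d lam (m - i)‖ ≤ (((m - i) + d - 1).choose (m - i) : ℝ) := by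
        have := abs_coeff_prod_geom lam hlam Finset.univ (m - i)
        simpa [hh, HS, Finset.card_univ] using this
      have hsymm : ((m - i) + d - 1).choose (m - i) = ((m - i) + d - 1).choose (d - 1) := by
        have h := Nat.choose_symm (n := (m - i) + d - 1) (k := m - i) (by omega)
        rw [show (m - i) + d - 1 - (m - i) = d - 1 by omega] at h
        omega
      have hmono : ((m - i) + d - 1).choose (d - 1) ≤ (m + d - 1).choose (d - 1) :=
        Nat.choose_le_choose _ (by omega)
      have hh2 : ‖hh d lam (m - i)‖ ≤ ((m + d - 1).choose (d - 1) : ℝ) := by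
        refine hh1.trans ?_
        exact_mod_cast (hsymm ▸ hmono)
      exact mul_le_mul he hh2 (norm_nonneg _)
        (Nat.cast_nonneg _)
    calc ‖∑ i ∈ range (m + 1),
            (-1) ^ i * esymm d lam (k + i) * hh d lam (m - i)‖
        ≤ ∑ i ∈ range (m + 1),
            ‖(-1) ^ i * esymm d lam (k + i) * hh d lam (m - i)‖ :=
          norm_sum_le _ _
      _ ≤ ∑ i ∈ range (m + 1), (d.choose (k + i) : ℝ) * ((m + d - 1).choose (d - 1) : ℝ) :=
          Finset.sum_le_sum hterm
      _ = ((∑ i ∈ range (m + 1), d.choose (k + i)) * ((m + d - 1).choose (d - 1)) : ℕ) := by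
          push_cast
          rw [← Finset.sum_mul]
      _ ≤ ((2 ^ d * (m + d).choose d : ℕ) : ℝ) := by
          have hA : ∑ i ∈ range (m + 1), d.choose (k + i) ≤ 2 ^ d := sum_choose_le d k m
          have hB : (m + d - 1).choose (d - 1) ≤ (m + d).choose d := by
            calc (m + d - 1).choose (d - 1)
                ≤ (m + d - 1).choose (d - 1) + (m + d - 1).choose ((d - 1) + 1) :=
                  Nat.le_add_right _ _
              _ = ((m + d - 1) + 1).choose ((d - 1) + 1) := (Nat.choose_succ_succ _ _).symm
              _ = (m + d).choose d := by
                  congr 1 <;> omega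
          exact_mod_cast Nat.mul_le_mul hA hB
  -- Step 2: 2^d * C(m+d,d) ≤ (2 e (m+d) / d)^d
  have hfact : (d.factorial : ℝ) * ((m + d).choose d : ℝ) ≤ ((m + d : ℕ) : ℝ) ^ d := by
    exact_mod_cast (Nat.descFactorial_eq_factorial_mul_choose (m + d) d ▸
      Nat.descFactorial_le_pow (m + d) d)
  have hdd : (d : ℝ) ^ d ≤ Real.exp 1 ^ d * (d.factorial : ℝ) := pow_le_exp_factorial d
  have hfacpos : (0 : ℝ) < (d.factorial : ℝ) := by exact_mod_cast d.factorial_pos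
  have step2 : ((2 ^ d * (m + d).choose d : ℕ) : ℝ) ≤
      (2 * Real.exp 1 * ((m : ℝ) + d) / d) ^ d := by
    rw [div_pow, le_div_iff₀ (by positivity)]
    have e1 : ((2 ^ d * (m + d).choose d : ℕ) : ℝ) = 2 ^ d * ((m + d).choose d : ℝ) := by
      push_cast; ring
    rw [e1]
    have c1 : ((m + d).choose d : ℝ) * (d : ℝ) ^ d ≤
        ((m + d).choose d : ℝ) * (Real.exp 1 ^ d * (d.factorial : ℝ)) :=
      mul_le_mul_of_nonneg_left hdd (Nat.cast_nonneg _)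
    have c2 : ((m + d).choose d : ℝ) * (Real.exp 1 ^ d * (d.factorial : ℝ)) ≤
        Real.exp 1 ^ d * ((m + d : ℕ) : ℝ) ^ d := by
      have := mul_le_mul_of_nonneg_left hfact (le_of_lt (pow_pos (Real.exp_pos 1) d))
      nlinarith [pow_pos (Real.exp_pos 1) d]
    have c3 : (2 : ℝ) ^ d * ((m + d).choose d : ℝ) * (d : ℝ) ^ d ≤
        2 ^ d * (Real.exp 1 ^ d * ((m + d : ℕ) : ℝ) ^ d) := by
      have h2 : (0 : ℝ) ≤ 2 ^ d := by positivity
      calc (2 : ℝ) ^ d * ((m + d).choose d : ℝ) * (d : ℝ) ^ d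
          = 2 ^ d * (((m + d).choose d : ℝ) * (d : ℝ) ^ d) := by ring
        _ ≤ 2 ^ d * (Real.exp 1 ^ d * ((m + d : ℕ) : ℝ) ^ d) :=
            mul_le_mul_of_nonneg_left (c1.trans c2) h2
    calc (2 : ℝ) ^ d * ((m + d).choose d : ℝ) * (d : ℝ) ^ d
        ≤ 2 ^ d * (Real.exp 1 ^ d * ((m + d : ℕ) : ℝ) ^ d) := c3
      _ = (2 * Real.exp 1 * ((m : ℝ) + d)) ^ d := by
          push_cast
          rw [mul_pow, mul_pow]
          ring
  -- Step 3: compare with the target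
  have hM1 : ((m : ℝ) + k) ≤ (max (m + k) d : ℝ) := by
    have : (m + k : ℕ) ≤ max (m + k) d := le_max_left _ _
    push_cast
    exact_mod_cast this
  have hM2 : ((d : ℝ)) ≤ (max (m + k) d : ℝ) := by
    have : (d : ℕ) ≤ max (m + k) d := le_max_right _ _
    exact_mod_cast this
  have step3 : (2 * Real.exp 1 * ((m : ℝ) + d) / d) ^ d ≤
      (8 * Real.exp 1 * (max (m + k) d : ℝ) / (d : ℝ)) ^ d := by
    have hnum : 2 * Real.exp 1 * ((m : ℝ) + d) ≤ 8 * Real.exp 1 * (max (m + k) d : ℝ) := by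
      nlinarith [Real.exp_pos 1, hM1, hM2, (by exact_mod_cast hk1 : (1 : ℝ) ≤ (k : ℝ))]
    apply pow_le_pow_left₀ (by positivity)
    exact div_le_div₀ (by positivity) hnum hdpos (le_refl _)
  calc ‖betaC d lam m k‖ ≤ _ := step1
    _ ≤ _ := step2
    _ ≤ _ := step3
end

section
/- Let d ≥ 1 and let λ, λ̂ ∈ ℂ^d satisfy |λ_k| ≤ 1 and |λ̂_k| ≤ 1 for every k ∈ {1,…,d}. Let R_1, …, R_d and R̃_1, …, R̃_d be given complex numbers, and for every integer h ≥ d+1 define R_h := Σ_{k=1}^{d} (−1)^{k+1} e_k(λ) · R_{h−k} and R̃_h := Σ_{k=1}^{d} (−1)^{k+1} e_k(λ̂) · R̃_{h−k}. Then for every integer h ≥ 3d+1, |R̃_h − R_h| ≤ 2d · (16e·h/d)^{2d} · max_{1 ≤ h' ≤ 3d} |R_{h'} − R̃_{h'}|. -/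
open Finset

noncomputable abbrev Complex.abs : AbsoluteValue ℂ ℝ := NormedField.toAbsoluteValue ℂ

noncomputable def opL : List ℂ → (ℕ → ℂ) → ℕ → ℂ
  | [], f => f
  | μ :: L, f => fun h => opL L f (h + 1) - μ * opL L f h

@[simp] lemma opL_nil (f : ℕ → ℂ) : opL [] f = f := rfl

lemma opL_cons (μ : ℂ) (L : List ℂ) (f : ℕ → ℂ) (h : ℕ) :
    opL (μ :: L) f h = opL L f (h + 1) - μ * opL L f h := rfl

lemma esymm_cons (a : ℂ) (s : Multiset ℂ) (k : ℕ) :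
    (a ::ₘ s).esymm (k + 1) = s.esymm (k + 1) + a * s.esymm k := by
  simp only [Multiset.esymm, Multiset.powersetCard_cons, Multiset.map_add, Multiset.sum_add,
    Multiset.map_map]
  congr 1
  rw [← Multiset.sum_map_mul_left]
  exact congrArg _ (Multiset.map_congr rfl (fun t _ => by simp))

lemma esymm_card_lt (s : Multiset ℂ) (k : ℕ) (hk : Multiset.card s < k) :
    s.esymm k = 0 := by
  simp [Multiset.esymm, Multiset.powersetCard_eq_empty _ hk]

lemma esymm_zero' (s : Multiset ℂ) : s.esymm 0 = 1 := by
  simp [Multiset.esymm, Multiset.powersetCard_zero_left]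

lemma opL_eq_sum (L : List ℂ) (f : ℕ → ℂ) (h : ℕ) :
    opL L f h = ∑ k ∈ range (L.length + 1),
      (-1 : ℂ) ^ k * ((↑L : Multiset ℂ).esymm k) * f (h + (L.length - k)) := by
  induction L generalizing h with
  | nil => simp [esymm_zero']
  | cons μ L ih =>
    have hcoe : ((↑(μ :: L) : Multiset ℂ)) = μ ::ₘ (↑L : Multiset ℂ) := rfl
    simp only [opL_cons, ih, List.length_cons, hcoe]
    have hRHS : ∑ k ∈ range (L.length + 1 + 1),
        (-1 : ℂ) ^ k * ((μ ::ₘ (↑L : Multiset ℂ)).esymm k) * f (h + (L.length + 1 - k))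
        = f (h + (L.length + 1)) + ∑ k ∈ range (L.length + 1),
          (-1 : ℂ) ^ (k+1) * (((↑L : Multiset ℂ)).esymm (k+1) + μ * ((↑L : Multiset ℂ)).esymm k)
            * f (h + (L.length - k)) := by
      rw [Finset.sum_range_succ', add_comm]
      congr 1
      · simp [esymm_zero']
      · refine Finset.sum_congr rfl fun k hk => ?_
        rw [esymm_cons]
        congr 2
        omega
    have hLHS : ∑ k ∈ range (L.length + 1),
        (-1 : ℂ) ^ k * ((↑L : Multiset ℂ).esymm k) * f (h + 1 + (L.length - k))
        = f (h + (L.length + 1)) + ∑ k ∈ range (L.length + 1),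
          (-1 : ℂ) ^ (k+1) * ((↑L : Multiset ℂ).esymm (k+1)) * f (h + (L.length - k)) := by
      have h1 : ∀ k ∈ range (L.length + 1), (-1 : ℂ) ^ k * ((↑L : Multiset ℂ).esymm k)
          * f (h + 1 + (L.length - k))
          = (-1 : ℂ) ^ k * ((↑L : Multiset ℂ).esymm k) * f (h + (L.length + 1 - k)) := by
        intro k hk
        simp only [Finset.mem_range] at hk
        congr 2
        omega
      rw [Finset.sum_congr rfl h1, Finset.sum_range_succ', add_comm]
      congr 1
      · simp [esymm_zero']
      · rw [Finset.sum_range_succ]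
        have hz : ((↑L : Multiset ℂ).esymm (L.length + 1)) = 0 := by
          apply esymm_card_lt
          simp
        rw [hz]
        have h2 : ∀ k ∈ range L.length, (-1 : ℂ) ^ (k+1) * ((↑L : Multiset ℂ).esymm (k+1))
            * f (h + (L.length + 1 - (k+1)))
            = (-1 : ℂ) ^ (k+1) * ((↑L : Multiset ℂ).esymm (k+1)) * f (h + (L.length - k)) := by
          intro k hk
          simp only [Finset.mem_range] at hk
          congr 2
          omega
        rw [Finset.sum_congr rfl h2]
        ring
    rw [hLHS, hRHS, Finset.mul_sum]
    rw [add_sub_assoc, ← Finset.sum_sub_distrib]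
    congr 1
    refine Finset.sum_congr rfl fun k hk => ?_
    ring

lemma opL_sub (L : List ℂ) (f g : ℕ → ℂ) (h : ℕ) :
    opL L (fun n => f n - g n) h = opL L f h - opL L g h := by
  induction L generalizing h with
  | nil => rfl
  | cons μ L ih => simp only [opL_cons, ih]; ring

lemma opL_append (L1 L2 : List ℂ) (f : ℕ → ℂ) (h : ℕ) :
    opL (L1 ++ L2) f h = opL L1 (opL L2 f) h := by
  induction L1 generalizing h with
  | nil => rfl
  | cons μ L ih => simp only [List.cons_append, opL_cons, ih]

lemma opL_D (L : List ℂ) (μ : ℂ) (f : ℕ → ℂ) (h : ℕ) :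
    opL L (fun n => f (n + 1) - μ * f n) h = opL L f (h + 1) - μ * opL L f h := by
  induction L generalizing h with
  | nil => rfl
  | cons ν L ih => simp only [opL_cons, ih]; ring

lemma opL_comm (L1 L2 : List ℂ) (f : ℕ → ℂ) (h : ℕ) :
    opL L1 (opL L2 f) h = opL L2 (opL L1 f) h := by
  induction L1 generalizing h with
  | nil => rfl
  | cons μ L ih =>
    simp only [opL_cons, ih]
    rw [show opL (μ :: L) f = fun n => opL L f (n + 1) - μ * opL L f n from rfl]
    rw [opL_D L2 μ (opL L f) h]

lemma opL_of_zero (L : List ℂ) (f : ℕ → ℂ) (h : ℕ) (hf : ∀ j, h ≤ j → f j = 0) :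
    opL L f h = 0 := by
  induction L generalizing h with
  | nil => exact hf h le_rfl
  | cons μ L ih =>
    simp only [opL_cons]
    rw [ih (h+1) (fun j hj => hf j (by omega)), ih h hf]
    ring

lemma esymm_eq_multiset (d : ℕ) (lam : Fin d → ℂ) (k : ℕ) :
    esymm d lam k = ((↑(List.ofFn lam) : Multiset ℂ)).esymm k := by
  rw [show ((↑(List.ofFn lam) : Multiset ℂ)) = (Finset.univ : Finset (Fin d)).val.map lam from
    (Fin.univ_val_map lam).symm, Finset.esymm_map_val]
  rfl

lemma opL_of_rec (d : ℕ) (lam : Fin d → ℂ) (R : ℕ → ℂ)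
    (hR : ∀ h : ℕ, d + 1 ≤ h →
      R h = ∑ k ∈ Finset.Icc 1 d, (-1 : ℂ) ^ (k + 1) * esymm d lam k * R (h - k))
    (h : ℕ) (hh : 1 ≤ h) : opL (List.ofFn lam) R h = 0 := by
  rw [opL_eq_sum]
  simp only [List.length_ofFn, ← esymm_eq_multiset]
  rw [Finset.sum_range_succ']
  have h0 : (-1 : ℂ) ^ 0 * esymm d lam 0 * R (h + (d - 0)) = R (h + d) := by
    simp [esymm, Finset.powersetCard_zero]
  rw [h0, hR (h + d) (by omega)]
  have hIcc : ∑ k ∈ Finset.Icc 1 d, (-1 : ℂ) ^ (k + 1) * esymm d lam k * R (h + d - k)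
      = ∑ k ∈ range d, (-1 : ℂ) ^ k * esymm d lam (k + 1) * R (h + d - (k + 1)) := by
    rw [← Finset.Ico_add_one_right_eq_Icc, Finset.sum_Ico_eq_sum_range]
    refine Finset.sum_congr (by norm_num) fun k hk => ?_
    have e1 : 1 + k = k + 1 := by omega
    rw [e1]
    have e2 : (-1 : ℂ) ^ (k + 1 + 1) = (-1) ^ k := by rw [pow_succ, pow_succ]; ring
    rw [e2]
  rw [hIcc, ← Finset.sum_add_distrib]
  apply Finset.sum_eq_zero
  intro k hk
  simp only [Finset.mem_range] at hk
  have : R (h + (d - (k + 1))) = R (h + d - (k + 1)) := by congr 1; omega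
  rw [this]
  ring

lemma opL_abs_le (L : List ℂ) (f : ℕ → ℂ) (C : ℝ) :
    ∀ h : ℕ, (∀ μ ∈ L, Complex.abs μ ≤ 1) →
    (∀ j, h ≤ j → j ≤ h + L.length → Complex.abs (f j) ≤ C) →
    Complex.abs (opL L f h) ≤ 2 ^ L.length * C := by
  induction L with
  | nil => intro h _ hf; simpa using hf h le_rfl (by simp)
  | cons μ L ih =>
    intro h hL hf
    have h1 : Complex.abs (opL L f (h+1)) ≤ 2 ^ L.length * C :=
      ih (h+1) (fun ν hν => hL ν (List.mem_cons_of_mem _ hν))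
        (fun j hj1 hj2 => hf j (by omega) (by simp at hj2 ⊢; omega))
    have h2 : Complex.abs (opL L f h) ≤ 2 ^ L.length * C :=
      ih h (fun ν hν => hL ν (List.mem_cons_of_mem _ hν))
        (fun j hj1 hj2 => hf j hj1 (by simp at hj2 ⊢; omega))
    have hμ : Complex.abs μ ≤ 1 := hL μ (List.mem_cons_self)
    calc Complex.abs (opL (μ :: L) f h)
        ≤ Complex.abs (opL L f (h+1)) + Complex.abs (μ * opL L f h) := by
          rw [opL_cons]; exact AbsoluteValue.sub_le_add _ _ _
      _ ≤ 2 ^ L.length * C + 1 * (2 ^ L.length * C) := by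
          rw [map_mul]
          have := AbsoluteValue.nonneg Complex.abs (opL L f h)
          have := AbsoluteValue.nonneg Complex.abs μ
          nlinarith
      _ ≤ 2 ^ (μ :: L).length * C := by
          simp only [List.length_cons]
          rw [pow_succ]
          nlinarith [h2, AbsoluteValue.nonneg Complex.abs (opL L f h)]

lemma sum_choose_Ico (r : ℕ) : ∀ h : ℕ, 1 ≤ h →
    (∑ t ∈ Finset.Ico 1 h, ((t + r).choose r)) + 1 = (h + r).choose (r + 1) := by
  intro h
  induction h with
  | zero => omega
  | succ h ih =>
    intro _
    rcases Nat.eq_or_lt_of_le (Nat.one_le_iff_ne_zero.mpr (by omega) : 1 ≤ h + 1) with he | hlt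
    · rw [← he]
      rw [show 1 + r = r + 1 by omega]
      simp
    · have hh : 1 ≤ h := by omega
      rw [Finset.sum_Ico_succ_top hh]
      have := ih hh
      have hp : (h + 1 + r).choose (r + 1) = (h + r).choose r + (h + r).choose (r + 1) := by
        rw [show h + 1 + r = (h + r) + 1 by omega, Nat.choose_succ_succ]
      omega

lemma unroll (g : ℕ → ℂ) (μ : ℂ) (hμ : Complex.abs μ ≤ 1) (β : ℕ → ℝ)
    (hstep : ∀ t, 1 ≤ t → Complex.abs (g (t + 1) - μ * g t) ≤ β t) :
    ∀ h, 1 ≤ h → Complex.abs (g h) ≤ Complex.abs (g 1) + ∑ t ∈ Finset.Ico 1 h, β t := by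
  intro h
  induction h with
  | zero => omega
  | succ h ih =>
    intro _
    rcases Nat.eq_or_lt_of_le (Nat.one_le_iff_ne_zero.mpr (by omega) : 1 ≤ h + 1) with he | hlt
    · rw [← he]; simp
    · have hh : 1 ≤ h := by omega
      rw [Finset.sum_Ico_succ_top hh, ← add_assoc]
      calc Complex.abs (g (h + 1))
          = Complex.abs (μ * g h + (g (h + 1) - μ * g h)) := by ring_nf
        _ ≤ Complex.abs (μ * g h) + Complex.abs (g (h + 1) - μ * g h) := by
            exact AbsoluteValue.add_le _ _ _
        _ ≤ Complex.abs (g h) + β h := by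
            rw [map_mul]
            have h3 := hstep h hh
            have := AbsoluteValue.nonneg Complex.abs (g h)
            have := AbsoluteValue.nonneg Complex.abs μ
            nlinarith
        _ ≤ Complex.abs (g 1) + ∑ t ∈ Finset.Ico 1 h, β t + β h := by
            have := ih hh
            linarith

lemma peel (C₀ : ℝ) (h0 : 0 ≤ C₀) :
    ∀ (L : List ℂ), (∀ μ ∈ L, Complex.abs μ ≤ 1) →
    ∀ (f : ℕ → ℂ) (C₁ : ℝ) (r : ℕ), C₀ ≤ C₁ →
    (∀ j, 1 ≤ j → j ≤ L.length → Complex.abs (f j) ≤ C₀) →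
    (∀ h, 1 ≤ h → Complex.abs (opL L f h) ≤ C₁ * ((h + r).choose r : ℕ)) →
    ∀ h, 1 ≤ h → Complex.abs (f h) ≤
      (2 ^ L.length * C₀ + C₁) * (((h + r + L.length).choose (r + L.length) : ℕ) : ℝ) := by
  intro L
  induction L with
  | nil =>
    intro _ f C₁ r h01 _ hforce h hh
    simp only [List.length_nil, pow_zero, Nat.add_zero]
    calc Complex.abs (f h) ≤ C₁ * ((h + r).choose r : ℕ) := hforce h hh
      _ ≤ (1 * C₀ + C₁) * ((h + r).choose r : ℕ) := by
          have : (0:ℝ) ≤ ((h + r).choose r : ℕ) := Nat.cast_nonneg _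
          nlinarith
  | cons μ L ih =>
    intro hL f C₁ r h01 hinit hforce h hh
    have hLmem : ∀ ν ∈ L, Complex.abs ν ≤ 1 := fun ν hν => hL ν (List.mem_cons_of_mem _ hν)
    set g := opL L f with hg
    have hg1 : Complex.abs (g 1) ≤ 2 ^ L.length * C₀ :=
      opL_abs_le L f C₀ 1 hLmem (fun j hj1 hj2 => hinit j hj1 (by simp only [List.length_cons]; omega))
    have hstep : ∀ t, 1 ≤ t → Complex.abs (g (t + 1) - μ * g t) ≤ C₁ * ((t + r).choose r : ℕ) :=
      fun t ht => hforce t ht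
    have hgbound : ∀ h', 1 ≤ h' → Complex.abs (g h') ≤
        (2 ^ L.length * C₀ + C₁) * (((h' + (r + 1)).choose (r + 1) : ℕ) : ℝ) := by
      intro h' hh'
      have hu := unroll g μ (hL μ (List.mem_cons_self)) _ hstep h' hh'
      have hsum : ∑ t ∈ Finset.Ico 1 h', C₁ * (((t + r).choose r : ℕ) : ℝ)
          = C₁ * ((∑ t ∈ Finset.Ico 1 h', ((t + r).choose r) : ℕ) : ℝ) := by
        push_cast [Finset.mul_sum]
        rfl
      have hchoose := sum_choose_Ico r h' hh'
      have hA : ((h' + r).choose (r + 1)) ≤ ((h' + (r + 1)).choose (r + 1)) :=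
        Nat.choose_le_choose _ (by omega)
      have hB : 1 ≤ ((h' + (r + 1)).choose (r + 1)) := Nat.choose_pos (by omega)
      have hsum2 : ((∑ t ∈ Finset.Ico 1 h', ((t + r).choose r) : ℕ) : ℝ)
          = (((h' + r).choose (r + 1) : ℕ) : ℝ) - 1 := by
        rw [← hchoose]; push_cast; ring
      rw [hsum, hsum2] at hu
      have hAc : (((h' + r).choose (r + 1) : ℕ) : ℝ) ≤ (((h' + (r + 1)).choose (r + 1) : ℕ) : ℝ) := by
        exact_mod_cast hA
      have hBc : (1 : ℝ) ≤ (((h' + (r + 1)).choose (r + 1) : ℕ) : ℝ) := by exact_mod_cast hB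
      have hp : (0:ℝ) ≤ 2 ^ L.length * C₀ := by positivity
      nlinarith [hu]
    have hres := ih hLmem f (2 ^ L.length * C₀ + C₁) (r + 1)
      (by nlinarith [pow_nonneg (by norm_num : (0:ℝ) ≤ 2) L.length])
      (fun j hj1 hj2 => hinit j hj1 (by simp only [List.length_cons]; omega))
      hgbound h hh
    have hidx : (h + (r + 1) + L.length).choose ((r + 1) + L.length)
        = (h + r + (μ :: L).length).choose (r + (μ :: L).length) := by
      simp only [List.length_cons]
      congr 1 <;> omega
    rw [hidx] at hres
    refine hres.trans ?_
    have : (0:ℝ) ≤ (((h + r + (μ :: L).length).choose (r + (μ :: L).length) : ℕ) : ℝ) :=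
      Nat.cast_nonneg _
    have hcoef : (2:ℝ) ^ L.length * C₀ + (2 ^ L.length * C₀ + C₁) = 2 ^ (μ :: L).length * C₀ + C₁ := by
      simp only [List.length_cons, pow_succ]
      ring
    rw [hcoef]

lemma numeric (n h : ℕ) (hn : 2 ≤ n) (hh : n + 1 ≤ h) :
    ((2:ℝ) ^ n + 1) * (((h + n).choose n : ℕ) : ℝ)
      ≤ (n : ℝ) * (32 * Real.exp 1 * (h : ℝ) / (n : ℝ)) ^ n := by
  have hN : (0:ℝ) < n := by exact_mod_cast (by omega : 0 < n)
  have hH : (0:ℝ) < h := by exact_mod_cast (by omega : 0 < h)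
  have hE : (0:ℝ) < Real.exp 1 := Real.exp_pos 1
  have hF : (0:ℝ) < (Nat.factorial n : ℝ) := by exact_mod_cast Nat.factorial_pos n
  have e1 : (((h + n).choose n : ℕ) : ℝ) ≤ ((h : ℝ) + n) ^ n / (Nat.factorial n : ℝ) := by
    have := Nat.choose_le_pow_div (α := ℝ) n (h + n)
    push_cast at this ⊢
    exact this
  have e2 : ((h : ℝ) + n) ^ n ≤ (2 * h) ^ n := by
    apply pow_le_pow_left₀ (by positivity)
    have : (n : ℝ) ≤ h := by exact_mod_cast (by omega : n ≤ h)
    linarith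
  have e3 : (n : ℝ) ^ n ≤ Real.exp 1 ^ n * (Nat.factorial n : ℝ) := by
    have hterm : (n : ℝ) ^ n / (Nat.factorial n : ℝ) ≤ Real.exp (n : ℝ) := by
      have hsum := Real.sum_le_exp_of_nonneg (x := (n : ℝ)) (by positivity) (n + 1)
      refine le_trans ?_ hsum
      have := Finset.single_le_sum (f := fun i => (n : ℝ) ^ i / (Nat.factorial i : ℝ))
        (fun i _ => by positivity) (Finset.mem_range.mpr (Nat.lt_succ_self n))
      simpa using this
    have hexp : Real.exp (n : ℝ) = Real.exp 1 ^ n := by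
      rw [← Real.exp_nat_mul]
      norm_num
    rw [div_le_iff₀ hF, hexp] at hterm
    exact hterm
  have e4 : (((h + n).choose n : ℕ) : ℝ) ≤ (2 * Real.exp 1 * (h:ℝ) / n) ^ n := by
    refine (e1.trans ?_)
    have hstep : ((h : ℝ) + n) ^ n / (Nat.factorial n : ℝ)
        ≤ (2 * h) ^ n / (Nat.factorial n : ℝ) := by gcongr
    refine hstep.trans ?_
    rw [div_pow]
    rw [div_le_div_iff₀ hF (by positivity)]
    simp only [mul_pow]
    have hmm := mul_le_mul_of_nonneg_left e3
      (show (0:ℝ) ≤ 2 ^ n * (h:ℝ) ^ n by positivity)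
    nlinarith [hmm]
  have e5 : ((2:ℝ) ^ n + 1) ≤ (n : ℝ) * 16 ^ n := by
    have h16 : (2:ℝ) ^ n ≤ 16 ^ n := pow_le_pow_left₀ (by norm_num) (by norm_num) n
    have h2n : (2:ℝ) ≤ n := by exact_mod_cast hn
    have h1 : (1:ℝ) ≤ 16 ^ n := one_le_pow₀ (by norm_num)
    nlinarith
  calc ((2:ℝ) ^ n + 1) * (((h + n).choose n : ℕ) : ℝ)
      ≤ ((n : ℝ) * 16 ^ n) * (2 * Real.exp 1 * (h:ℝ) / n) ^ n := by
        have hc : (0:ℝ) ≤ (((h + n).choose n : ℕ) : ℝ) := Nat.cast_nonneg _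
        have hp : (0:ℝ) ≤ (2 * Real.exp 1 * (h:ℝ) / n) ^ n := by positivity
        nlinarith [mul_le_mul e5 e4 hc (by positivity : (0:ℝ) ≤ (n : ℝ) * 16 ^ n)]
    _ = (n : ℝ) * (32 * Real.exp 1 * (h : ℝ) / (n : ℝ)) ^ n := by
        rw [mul_assoc, ← mul_pow]
        congr 2
        field_simp
        ring

/-- Lemma 4.4: error propagation bound for order-`d` autoregressions. -/
theorem error_propagation_bound (d : ℕ) (hd : 1 ≤ d) (lam lamh : Fin d → ℂ)
    (hlam : ∀ k, ‖lam k‖ ≤ 1) (hlamh : ∀ k, ‖lamh k‖ ≤ 1)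
    (R Rt : ℕ → ℂ)
    (hR : ∀ h : ℕ, d + 1 ≤ h →
      R h = ∑ k ∈ Finset.Icc 1 d, (-1 : ℂ) ^ (k + 1) * esymm d lam k * R (h - k))
    (hRt : ∀ h : ℕ, d + 1 ≤ h →
      Rt h = ∑ k ∈ Finset.Icc 1 d, (-1 : ℂ) ^ (k + 1) * esymm d lamh k * Rt (h - k)) :
    ∀ h : ℕ, 3 * d + 1 ≤ h →
      ‖Rt h - R h‖ ≤
        2 * (d : ℝ) * (16 * Real.exp 1 * (h : ℝ) / (d : ℝ)) ^ (2 * d) *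
          (Finset.Icc 1 (3 * d)).sup' (Finset.nonempty_Icc.mpr (by omega))
            (fun h' => ‖R h' - Rt h'‖) := by
  intro h hh
  set M := (Finset.Icc 1 (3 * d)).sup' (Finset.nonempty_Icc.mpr (by omega))
    (fun h' => ‖R h' - Rt h'‖) with hMdef
  set A := List.ofFn lamh with hA
  set B := List.ofFn lam with hB
  set L := A ++ B with hLdef
  have hLlen : L.length = 2 * d := by simp [hLdef, hA, hB]; omega
  have hLmem : ∀ μ ∈ L, Complex.abs μ ≤ 1 := by
    intro μ hμ
    rw [hLdef, List.mem_append] at hμ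
    rcases hμ with hμ | hμ <;> rw [List.mem_ofFn] at hμ <;> obtain ⟨i, rfl⟩ := hμ
    · exact hlamh i
    · exact hlam i
  have hzR : ∀ t, 1 ≤ t → opL L R t = 0 := by
    intro t ht
    rw [hLdef, opL_append]
    exact opL_of_zero A _ t (fun j hj => opL_of_rec d lam R hR j (le_trans ht hj))
  have hzRt : ∀ t, 1 ≤ t → opL L Rt t = 0 := by
    intro t ht
    rw [hLdef, opL_append, opL_comm]
    exact opL_of_zero B _ t (fun j hj => opL_of_rec d lamh Rt hRt j (le_trans ht hj))
  set Δ : ℕ → ℂ := fun n => Rt n - R n with hΔ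
  have hzΔ : ∀ t, 1 ≤ t → opL L Δ t = 0 := by
    intro t ht
    rw [hΔ, opL_sub, hzR t ht, hzRt t ht, sub_zero]
  have hM0 : 0 ≤ M := by
    have h1mem : (1:ℕ) ∈ Finset.Icc 1 (3 * d) := by simp; omega
    exact le_trans (AbsoluteValue.nonneg _ _)
      (Finset.le_sup' (fun h' => Complex.abs (R h' - Rt h')) h1mem)
  have hinit : ∀ j, 1 ≤ j → j ≤ L.length → Complex.abs (Δ j) ≤ M := by
    intro j hj1 hj2
    rw [hLlen] at hj2
    have hjmem : j ∈ Finset.Icc 1 (3 * d) := by simp; omega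
    have := Finset.le_sup' (fun h' => Complex.abs (R h' - Rt h')) hjmem
    rw [hΔ]
    calc Complex.abs (Rt j - R j) = Complex.abs (R j - Rt j) := AbsoluteValue.map_sub _ _ _
      _ ≤ M := this
  have hforce : ∀ t, 1 ≤ t → Complex.abs (opL L Δ t) ≤ M * (((t + 0).choose 0 : ℕ) : ℝ) := by
    intro t ht
    rw [hzΔ t ht]
    simp [hM0]
  have hpeel := peel M hM0 L hLmem Δ M 0 le_rfl hinit hforce h (by omega)
  have hidx : (h + 0 + L.length).choose (0 + L.length) = (h + 2 * d).choose (2 * d) := by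
    rw [hLlen]; congr 1 <;> omega
  rw [hidx] at hpeel
  have hnum := numeric (2 * d) h (by omega) (by omega)
  have hchoosenn : (0:ℝ) ≤ (((h + 2 * d).choose (2 * d) : ℕ) : ℝ) := Nat.cast_nonneg _
  have hfinal : Complex.abs (Δ h) ≤
      ((2 * d : ℕ) : ℝ) * (32 * Real.exp 1 * (h : ℝ) / ((2 * d : ℕ) : ℝ)) ^ (2 * d) * M := by
    calc Complex.abs (Δ h) ≤ (2 ^ L.length * M + M) * (((h + 2 * d).choose (2 * d) : ℕ) : ℝ) := hpeel
      _ = ((2 ^ (2 * d) + 1) * (((h + 2 * d).choose (2 * d) : ℕ) : ℝ)) * M := by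
          rw [hLlen]; ring
      _ ≤ (((2 * d : ℕ) : ℝ) * (32 * Real.exp 1 * (h : ℝ) / ((2 * d : ℕ) : ℝ)) ^ (2 * d)) * M := by
          exact mul_le_mul_of_nonneg_right hnum hM0
  refine hfinal.trans (le_of_eq ?_)
  congr 1
  have hdpos : (0:ℝ) < d := by exact_mod_cast (by omega : 0 < d)
  push_cast
  rw [show (32 : ℝ) * Real.exp 1 * (h : ℝ) / (2 * (d:ℝ)) = 16 * Real.exp 1 * (h : ℝ) / (d:ℝ) by
    field_simp; ring]
end

section
/- Let d ≥ 1, let A be a d×d real matrix whose characteristic polynomial factors over ℂ as ∏_{k=1}^{d} (X − λ_k) with λ ∈ ℂ^d satisfying |λ_1| = 1 and |λ_k| ≤ 1 for all k ∈ {1,…,d}. Then for any vectors u, v ∈ ℝ^d and any integer m ≥ d+1, |u^⊤ A^m v| ≤ 2^d · ∏_{k=2}^{d} ( Σ_{j=0}^{m−d} |λ_k|^j ) · max{ |u^⊤ A v|, …, |u^⊤ A^d v| }. -/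
open Polynomial Finset Matrix

section Aux

variable {d : ℕ} (Ac : Matrix (Fin d) (Fin d) ℂ) (uC vC : Fin d → ℂ)

/-- auxiliary bilinear sequence -/
noncomputable def Gb (l : List ℂ) (n : ℕ) : ℂ :=
  uC ⬝ᵥ ((Polynomial.aeval Ac (l.map fun μ => Polynomial.X - Polynomial.C μ).prod * Ac ^ n).mulVec vC)

lemma Gb_nil (n : ℕ) : Gb Ac uC vC [] n = uC ⬝ᵥ ((Ac ^ n).mulVec vC) := by
  simp [Gb]

lemma Gb_cons (μ : ℂ) (l : List ℂ) (n : ℕ) :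
    Gb Ac uC vC (μ :: l) n = Gb Ac uC vC l (n + 1) - μ * Gb Ac uC vC l n := by
  have hq : ((μ :: l).map fun ν => X - C ν).prod
      = (X - C μ) * (l.map fun ν => X - C ν).prod := by
    simp [List.prod_cons]
  set q := (l.map fun ν => X - C ν).prod with hqdef
  have comm : (aeval Ac q) * Ac = Ac * aeval Ac q := by
    have h1 : (aeval Ac q) * Ac = aeval Ac (q * X) := by simp [_root_.map_mul]
    have h2 : Ac * (aeval Ac q) = aeval Ac (X * q) := by simp [_root_.map_mul]
    rw [h1, h2, mul_comm q X]
  have key : aeval Ac ((μ :: l).map fun ν => X - C ν).prod * Ac ^ n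
      = aeval Ac q * Ac ^ (n + 1) - μ • (aeval Ac q * Ac ^ n) := by
    rw [hq, _root_.map_mul, map_sub, aeval_X, aeval_C]
    rw [sub_mul, sub_mul]
    congr 1
    · rw [pow_succ', ← mul_assoc, comm]
    · rw [Algebra.smul_def, mul_assoc]
  rw [Gb, key]
  simp [Gb, Matrix.sub_mulVec, Matrix.smul_mulVec, dotProduct_sub, dotProduct_smul,
    smul_eq_mul]
  rfl

end Aux

lemma list_one_le_prod {l : List ℂ} {f : ℂ → ℝ} (h : ∀ μ ∈ l, 1 ≤ f μ) :
    1 ≤ (l.map f).prod := by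
  induction l with
  | nil => simp
  | cons a l ih =>
    simp only [List.map_cons, List.prod_cons]
    have h1 : 1 ≤ f a := h a (by simp)
    have h2 : 1 ≤ (l.map f).prod := ih fun μ hμ => h μ (by simp [hμ])
    nlinarith

lemma list_prod_le_prod {l : List ℂ} {f g : ℂ → ℝ}
    (h0 : ∀ μ ∈ l, 0 ≤ f μ) (h : ∀ μ ∈ l, f μ ≤ g μ) :
    (l.map f).prod ≤ (l.map g).prod := by
  induction l with
  | nil => simp
  | cons a l ih =>
    simp only [List.map_cons, List.prod_cons]
    have hf0 : 0 ≤ (l.map f).prod := by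
      apply List.prod_nonneg
      intro x hx
      obtain ⟨μ, hμ, rfl⟩ := List.mem_map.mp hx
      exact h0 μ (by simp [hμ])
    have hfa : 0 ≤ f a := h0 a (by simp)
    have hga : f a ≤ g a := h a (by simp)
    have hrec : (l.map f).prod ≤ (l.map g).prod :=
      ih (fun μ hμ => h0 μ (by simp [hμ])) (fun μ hμ => h μ (by simp [hμ]))
    exact mul_le_mul hga hrec hf0 (le_trans hfa hga)

/-- Lemma D.2: eigenspectrum-adaptive bound on bilinear forms of matrix powers. Here
`λ_1, …, λ_d` (with `|λ_1| = 1`, `|λ_k| ≤ 1`) are the complex eigenvalues of the real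
matrix `A`, listed with multiplicity. -/
theorem adaptive_power_bound (d : ℕ) (hd : 1 ≤ d)
    (A : Matrix (Fin d) (Fin d) ℝ) (lam : Fin d → ℂ)
    (hchar : A.charpoly.map (algebraMap ℝ ℂ) = ∏ k : Fin d, (X - C (lam k)))
    (hlam1 : ‖lam ⟨0, hd⟩‖ = 1)
    (hlam : ∀ k, ‖lam k‖ ≤ 1)
    (u v : Fin d → ℝ) :
    ∀ m : ℕ, d + 1 ≤ m →
      |u ⬝ᵥ (A ^ m).mulVec v| ≤
        2 ^ d *
          (∏ k ∈ Finset.univ.filter (fun k : Fin d => 1 ≤ (k : ℕ)),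
            ∑ j ∈ Finset.range (m - d + 1), ‖lam k‖ ^ j) *
          (Finset.Icc 1 d).sup' (Finset.nonempty_Icc.mpr hd)
            (fun i => |u ⬝ᵥ (A ^ i).mulVec v|) := by
  intro m hm
  classical
  set φ : Matrix (Fin d) (Fin d) ℝ →ₐ[ℝ] Matrix (Fin d) (Fin d) ℂ :=
    (Algebra.ofId ℝ ℂ).mapMatrix with hφ
  set Ac : Matrix (Fin d) (Fin d) ℂ := φ A with hAcdef
  set uC : Fin d → ℂ := fun i => ((u i : ℝ) : ℂ) with huC
  set vC : Fin d → ℂ := fun i => ((v i : ℝ) : ℂ) with hvC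
  set B : ℝ := (Finset.Icc 1 d).sup' (Finset.nonempty_Icc.mpr hd)
      (fun i => |u ⬝ᵥ (A ^ i).mulVec v|) with hB
  -- Gb [] is the (complexified) real bilinear sequence
  have hreal : ∀ n : ℕ, Gb Ac uC vC [] n = ((u ⬝ᵥ (A ^ n).mulVec v : ℝ) : ℂ) := by
    intro n
    rw [Gb_nil]
    have hpow : Ac ^ n = (A ^ n).map (algebraMap ℝ ℂ) := by
      rw [hAcdef, ← map_pow]
      rfl
    rw [hpow]
    simp [dotProduct, Matrix.mulVec, Matrix.map_apply, Finset.mul_sum]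
    rfl
  have habs : ∀ n : ℕ, ‖Gb Ac uC vC [] n‖ = |u ⬝ᵥ (A ^ n).mulVec v| := by
    intro n
    rw [hreal n, Complex.norm_real, Real.norm_eq_abs]
  have hB0 : 0 ≤ B := by
    have h : (1 : ℕ) ∈ Finset.Icc 1 d := Finset.mem_Icc.mpr ⟨le_refl 1, hd⟩
    have h2 := Finset.le_sup' (fun i => |u ⬝ᵥ (A ^ i).mulVec v|) h
    exact le_trans (abs_nonneg _) h2
  -- the eigenvalue list (without λ₁)
  set E : Finset (Fin d) := Finset.univ.filter (fun k : Fin d => 1 ≤ (k : ℕ)) with hE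
  have hE' : E = Finset.univ.erase ⟨0, hd⟩ := by
    ext k
    simp [hE, Finset.mem_erase, Fin.ext_iff, Nat.one_le_iff_ne_zero]
  have hEcard : E.card = d - 1 := by
    rw [hE', Finset.card_erase_of_mem (Finset.mem_univ _)]
    simp
  set L : List ℂ := E.toList.map lam with hL
  have hLlen : L.length = d - 1 := by
    rw [hL, List.length_map, Finset.length_toList, hEcard]
  have hLmem : ∀ μ ∈ L, ‖μ‖ ≤ 1 := by
    intro μ hμ
    obtain ⟨k, _, rfl⟩ := List.mem_map.mp hμ
    exact hlam k
  -- Cayley–Hamilton over ℂ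
  have hCH : aeval Ac (∏ k : Fin d, (X - C (lam k))) = 0 := by
    rw [← hchar, aeval_map_algebraMap, hAcdef, aeval_algHom_apply, aeval_self_charpoly,
      map_zero]
  -- the product over the full list
  have hLprod : ((lam ⟨0, hd⟩ :: L).map fun μ => X - C μ).prod
      = ∏ k : Fin d, (X - C (lam k)) := by
    rw [List.map_cons, List.prod_cons, hL, List.map_map, Finset.prod_map_toList]
    rw [← Finset.mul_prod_erase Finset.univ (fun k => X - C (lam k)) (Finset.mem_univ ⟨0, hd⟩),
      hE']
    simp [Function.comp]
  have hzero : ∀ n : ℕ, Gb Ac uC vC (lam ⟨0, hd⟩ :: L) n = 0 := by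
    intro n
    rw [Gb, hLprod, hCH, zero_mul]
    simp
  have hstepL : ∀ n : ℕ, Gb Ac uC vC L (n + 1) = lam ⟨0, hd⟩ * Gb Ac uC vC L n := by
    intro n
    have := hzero n
    rw [Gb_cons] at this
    linear_combination this
  -- basic size bound
  have hbound : ∀ l : List ℂ, (∀ μ ∈ l, ‖μ‖ ≤ 1) → ∀ n : ℕ, 1 ≤ n →
      n + l.length ≤ d → ‖Gb Ac uC vC l n‖ ≤ 2 ^ l.length * B := by
    intro l
    induction l with
    | nil =>
      intro _ n h1 h2
      rw [habs n]
      simp only [List.length_nil, pow_zero, one_mul]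
      exact Finset.le_sup' (fun i => |u ⬝ᵥ (A ^ i).mulVec v|)
        (Finset.mem_Icc.mpr ⟨h1, by simpa using h2⟩)
    | cons μ l ih =>
      intro hmem n h1 h2
      rw [Gb_cons]
      have hμ1 : ‖μ‖ ≤ 1 := hmem μ (by simp)
      have hmem' : ∀ ν ∈ l, ‖ν‖ ≤ 1 := fun ν hν => hmem ν (by simp [hν])
      have hlen : n + 1 + l.length ≤ d := by
        simp only [List.length_cons] at h2; omega
      have b1 := ih hmem' (n + 1) (by omega) hlen
      have b2 := ih hmem' n h1 (by omega)
      calc ‖Gb Ac uC vC l (n + 1) - μ * Gb Ac uC vC l n‖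
          ≤ ‖Gb Ac uC vC l (n + 1)‖ + ‖μ * Gb Ac uC vC l n‖ := by
            exact (norm_sub_le _ _)
        _ ≤ 2 ^ l.length * B + 2 ^ l.length * B := by
            rw [norm_mul]
            have : ‖μ‖ * ‖Gb Ac uC vC l n‖
                ≤ ‖Gb Ac uC vC l n‖ :=
              mul_le_of_le_one_left (norm_nonneg _) hμ1
            have := le_trans this b2
            linarith
        _ = 2 ^ (μ :: l).length * B := by
            simp only [List.length_cons]
            ring
  -- the top level: constant modulus
  have htop : ∀ t : ℕ, ‖Gb Ac uC vC L (1 + t)‖ ≤ 2 ^ (d - 1) * B := by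
    have h1 : ‖Gb Ac uC vC L 1‖ ≤ 2 ^ (d - 1) * B := by
      have := hbound L hLmem 1 (le_refl 1) (by rw [hLlen]; omega)
      rwa [hLlen] at this
    intro t
    induction t with
    | zero => exact h1
    | succ t ih =>
      have : (1 + (t + 1)) = (1 + t) + 1 := by omega
      rw [this, hstepL, norm_mul, hlam1, one_mul]
      exact ih
  -- the geometric-sum factors
  set S : ℕ → ℂ → ℝ := fun t μ => ∑ j ∈ Finset.range (t + 1), ‖μ‖ ^ j with hS
  have hS1 : ∀ t μ, 1 ≤ S t μ := by
    intro t μ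
    rw [hS]
    calc (1 : ℝ) = ∑ j ∈ Finset.range 1, ‖μ‖ ^ j := by simp
    _ ≤ ∑ j ∈ Finset.range (t + 1), ‖μ‖ ^ j := by
        apply Finset.sum_le_sum_of_subset_of_nonneg
        · exact Finset.range_subset_range.mpr (by omega)
        · intro i _ _; positivity
  have hSmono : ∀ t μ, S t μ ≤ S (t + 1) μ := by
    intro t μ
    apply Finset.sum_le_sum_of_subset_of_nonneg
    · exact Finset.range_subset_range.mpr (by omega)
    · intro i _ _; positivity
  set C : ℝ := 2 ^ (d - 1) * B with hC
  have hC0 : 0 ≤ C := by positivity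
  -- main downward induction
  have main : ∀ k : ℕ, k ≤ L.length → ∀ t : ℕ,
      ‖Gb Ac uC vC (L.drop k) (1 + k + t)‖ ≤ C * ((L.take k).map (S t)).prod := by
    intro k
    induction k with
    | zero =>
      intro _ t
      simpa using htop t
    | succ k ihk =>
      intro hk t
      have hklt : k < L.length := by omega
      have hdropk : L.drop k = L[k] :: L.drop (k + 1) := List.drop_eq_getElem_cons hklt
      set μ := L[k] with hμdef
      have hrel : ∀ n : ℕ, Gb Ac uC vC (L.drop (k + 1)) (n + 1)
          = μ * Gb Ac uC vC (L.drop (k + 1)) n + Gb Ac uC vC (L.drop k) n := by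
        intro n
        have := Gb_cons Ac uC vC μ (L.drop (k + 1)) n
        rw [← hdropk] at this
        linear_combination -this
      have htake : ((L.take (k + 1)).map (S t)).prod = ((L.take k).map (S t)).prod * S t μ := by
        have hklt' : k < (L.map (S t)).length := by simpa using hklt
        rw [List.map_take, List.map_take, List.prod_take_succ _ _ hklt', List.getElem_map]
      have hPmono : ∀ t' : ℕ, ((L.take k).map (S t')).prod ≤ ((L.take k).map (S (t' + 1))).prod := by
        intro t'
        apply list_prod_le_prod
        · intro ν _; exact le_trans zero_le_one (hS1 t' ν)
        · intro ν _; exact hSmono t' ν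
      have hP1 : ∀ t' : ℕ, (1 : ℝ) ≤ ((L.take k).map (S t')).prod := by
        intro t'
        exact list_one_le_prod (fun ν _ => hS1 t' ν)
      -- inner induction on t
      have inner : ∀ t : ℕ, ‖Gb Ac uC vC (L.drop (k + 1)) (k + 2 + t)‖
          ≤ C * ((L.take k).map (S t)).prod * S t μ := by
        intro t
        induction t with
        | zero =>
          have hbase : ‖Gb Ac uC vC (L.drop (k + 1)) (k + 2)‖ ≤ C := by
            have hmem' : ∀ ν ∈ L.drop (k + 1), ‖ν‖ ≤ 1 :=
              fun ν hν => hLmem ν (List.drop_subset _ _ hν)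
            have hlen : (k + 2) + (L.drop (k + 1)).length ≤ d := by
              rw [List.length_drop, hLlen]
              omega
            have := hbound (L.drop (k + 1)) hmem' (k + 2) (by omega) hlen
            refine le_trans this ?_
            rw [hC]
            have : (2 : ℝ) ^ (L.drop (k + 1)).length ≤ 2 ^ (d - 1) := by
              apply pow_le_pow_right₀ (by norm_num)
              rw [List.length_drop, hLlen]; omega
            nlinarith
          have hS0 : S 0 μ = 1 := by simp [hS]
          rw [hS0, mul_one]
          simp only [Nat.add_zero]
          refine le_trans hbase ?_
          nlinarith [hP1 0, hC0]
        | succ t iht =>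
          have harith : k + 2 + (t + 1) = (k + 2 + t) + 1 := by omega
          rw [harith, hrel (k + 2 + t)]
          have houter := ihk (by omega) (t + 1)
          have harith2 : 1 + k + (t + 1) = k + 2 + t := by omega
          rw [harith2] at houter
          have h1 : ‖μ * Gb Ac uC vC (L.drop (k + 1)) (k + 2 + t)
              + Gb Ac uC vC (L.drop k) (k + 2 + t)‖
              ≤ ‖μ‖ * ‖Gb Ac uC vC (L.drop (k + 1)) (k + 2 + t)‖
                + ‖Gb Ac uC vC (L.drop k) (k + 2 + t)‖ := by
            refine le_trans (norm_add_le _ _) ?_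
            rw [norm_mul]
          refine le_trans h1 ?_
          have h2 : ‖Gb Ac uC vC (L.drop (k + 1)) (k + 2 + t)‖
              ≤ C * ((L.take k).map (S (t + 1))).prod * S t μ := by
            refine le_trans iht ?_
            have hSt0 : 0 ≤ S t μ := le_trans zero_le_one (hS1 t μ)
            exact mul_le_mul_of_nonneg_right (mul_le_mul_of_nonneg_left (hPmono t) hC0) hSt0
          have hgeom : S (t + 1) μ = ‖μ‖ * S t μ + 1 := by
            rw [hS]
            exact geom_sum_succ
          have habsμ : 0 ≤ ‖μ‖ := norm_nonneg _
          have hprod0 : 0 ≤ C * ((L.take k).map (S (t + 1))).prod := by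
            have := hP1 (t + 1); nlinarith
          calc ‖μ‖ * ‖Gb Ac uC vC (L.drop (k + 1)) (k + 2 + t)‖
                + ‖Gb Ac uC vC (L.drop k) (k + 2 + t)‖
              ≤ ‖μ‖ * (C * ((L.take k).map (S (t + 1))).prod * S t μ)
                + C * ((L.take k).map (S (t + 1))).prod := by
                have := mul_le_mul_of_nonneg_left h2 habsμ
                linarith [houter]
            _ = C * ((L.take k).map (S (t + 1))).prod * (‖μ‖ * S t μ + 1) := by ring
            _ = C * ((L.take k).map (S (t + 1))).prod * S (t + 1) μ := by rw [hgeom]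
      have harith3 : 1 + (k + 1) + t = k + 2 + t := by omega
      rw [harith3, htake, ← mul_assoc]
      exact inner t
  -- conclusion
  have hfin := main L.length (le_refl _) (m - d)
  rw [List.drop_length, List.take_length] at hfin
  have harr : 1 + L.length + (m - d) = m := by rw [hLlen]; omega
  rw [harr] at hfin
  rw [← habs m]
  refine le_trans hfin ?_
  have hprodeq : (L.map (S (m - d))).prod
      = ∏ k ∈ E, (∑ j ∈ Finset.range (m - d + 1), ‖lam k‖ ^ j) := by
    rw [hL, List.map_map, Finset.prod_map_toList]
    rfl
  rw [← hprodeq, hC]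
  have hP1' : (1 : ℝ) ≤ (L.map (S (m - d))).prod :=
    list_one_le_prod (fun ν _ => hS1 _ ν)
  have h2 : (2 : ℝ) ^ (d - 1) ≤ 2 ^ d := pow_le_pow_right₀ (by norm_num) (Nat.sub_le d 1)
  have hP0 : (0 : ℝ) ≤ (L.map (S (m - d))).prod := le_trans zero_le_one hP1'
  calc 2 ^ (d - 1) * B * (L.map (S (m - d))).prod
      ≤ 2 ^ d * B * (L.map (S (m - d))).prod :=
        mul_le_mul_of_nonneg_right (mul_le_mul_of_nonneg_right h2 hB0) hP0
    _ = 2 ^ d * (L.map (S (m - d))).prod * B := by ring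
end

section
/- Let d ≥ 1, let λ̂ ∈ ℂ^d, and let R̂_1, …, R̂_{3d} ∈ ℂ be given. For 1 ≤ m ≤ 2d define Δ̂_m := Σ_{k=1}^{d} (−1)^{k+1} e_k(λ̂) · R̂_{d+m−k} − R̂_{d+m}. Define R̃_h := R̂_h for 1 ≤ h ≤ d and R̃_h := Σ_{k=1}^{d} (−1)^{k+1} e_k(λ̂) · R̃_{h−k} for h ≥ d+1. Then for every 1 ≤ m ≤ 2d, R̃_{d+m} − R̂_{d+m} = Δ̂_m + Σ_{i=1}^{m−1} β_{i−1,1}(λ̂) · Δ̂_{m−i}. -/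
open Finset

/-- coefficient sequence: `c 0 = 1`, `c (i+1) = β_{i,1}` -/
noncomputable def cC (d : ℕ) (lam : Fin d → ℂ) : ℕ → ℂ
  | 0 => 1
  | i + 1 => betaC d lam i 1

lemma esymm_eq_zero (d : ℕ) (lam : Fin d → ℂ) {k : ℕ} (h : d < k) :
    esymm d lam k = 0 := by
  unfold esymm
  rw [Finset.powersetCard_eq_empty.2 (by simpa using h), Finset.sum_empty]

lemma sum_Icc_eq_sum_range' (a b : ℕ) (f : ℕ → ℂ) :
    ∑ j ∈ Icc a b, f j = ∑ i ∈ range (b + 1 - a), f (a + i) := by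
  rw [← Finset.Ico_add_one_right_eq_Icc, Finset.sum_Ico_eq_sum_range]

lemma betaC_unroll (d : ℕ) (lam : Fin d → ℂ) :
    ∀ m j, betaC d lam m j =
      (∑ i ∈ range m, (-1 : ℂ) ^ i * esymm d lam (j + i) * betaC d lam (m - 1 - i) 1)
        + (-1 : ℂ) ^ m * esymm d lam (j + m) := by
  intro m
  induction m with
  | zero => intro j; simp [betaC]
  | succ m ih =>
    intro j
    show betaC d lam m 1 * esymm d lam j - betaC d lam m (j + 1) = _
    rw [ih (j + 1), Finset.sum_range_succ' (fun i =>
      (-1 : ℂ) ^ i * esymm d lam (j + i) * betaC d lam (m + 1 - 1 - i) 1) m]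
    have h1 : ∀ i, i ∈ range m →
        (-1 : ℂ) ^ (i + 1) * esymm d lam (j + (i + 1)) * betaC d lam (m + 1 - 1 - (i + 1)) 1
          = -((-1 : ℂ) ^ i * esymm d lam (j + 1 + i) * betaC d lam (m - 1 - i) 1) := by
      intro i _
      have e1 : j + (i + 1) = j + 1 + i := by ring
      have e2 : m + 1 - 1 - (i + 1) = m - 1 - i := by omega
      rw [e1, e2]; ring
    rw [Finset.sum_congr rfl h1, Finset.sum_neg_distrib]
    have e3 : j + 1 + m = j + (m + 1) := by ring
    have e4 : m + 1 - 1 - 0 = m := by omega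
    rw [e3, e4]
    simp only [add_zero, pow_succ, one_mul]
    ring

lemma coeff_lemma (d : ℕ) (lam : Fin d → ℂ) (n : ℕ) :
    betaC d lam n 1 =
      ∑ k ∈ Icc 1 (n + 1), (-1 : ℂ) ^ (k + 1) * esymm d lam k * cC d lam (n + 1 - k) := by
  rw [sum_Icc_eq_sum_range']
  have hr : n + 1 + 1 - 1 = n + 1 := by omega
  rw [hr, Finset.sum_range_succ]
  have h1 : ∀ i, i ∈ range n →
      (-1 : ℂ) ^ (1 + i + 1) * esymm d lam (1 + i) * cC d lam (n + 1 - (1 + i))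
        = (-1 : ℂ) ^ i * esymm d lam (1 + i) * betaC d lam (n - 1 - i) 1 := by
    intro i hi
    rw [Finset.mem_range] at hi
    have e1 : n + 1 - (1 + i) = (n - 1 - i) + 1 := by omega
    have e2 : (1 : ℕ) + i + 1 = i + 2 := by omega
    rw [e1, e2, pow_add]
    show (-1:ℂ)^i * (-1:ℂ)^2 * _ * betaC d lam (n - 1 - i) 1 = _
    norm_num
  rw [Finset.sum_congr rfl h1]
  have e3 : n + 1 - (1 + n) = 0 := by omega
  have e4 : (1:ℕ) + n + 1 = n + 2 := by omega
  rw [e3, e4, betaC_unroll d lam n 1, pow_add]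
  show _ = _ + (-1:ℂ)^n * (-1:ℂ)^2 * esymm d lam (1 + n) * cC d lam 0
  norm_num [cC]

lemma key_lemma (d : ℕ) (hd : 1 ≤ d) (lamh : Fin d → ℂ)
    (Rh : ℕ → ℂ) (Δ : ℕ → ℂ)
    (hΔ : ∀ m : ℕ, Δ m =
      (∑ k ∈ Finset.Icc 1 d, (-1 : ℂ) ^ (k + 1) * esymm d lamh k * Rh (d + m - k)) -
        Rh (d + m))
    (Rt : ℕ → ℂ)
    (hRt1 : ∀ h : ℕ, 1 ≤ h → h ≤ d → Rt h = Rh h)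
    (hRt2 : ∀ h : ℕ, d + 1 ≤ h →
      Rt h = ∑ k ∈ Finset.Icc 1 d, (-1 : ℂ) ^ (k + 1) * esymm d lamh k * Rt (h - k)) :
    ∀ m : ℕ, 1 ≤ m →
      Rt (d + m) - Rh (d + m) = ∑ i ∈ range m, cC d lamh i * Δ (m - i) := by
  intro m
  induction m using Nat.strong_induction_on with
  | _ m IH =>
  intro hm
  have h1 : Rt (d + m) - Rh (d + m) = Δ m +
      ∑ k ∈ Icc 1 d, (-1 : ℂ) ^ (k + 1) * esymm d lamh k * (Rt (d + m - k) - Rh (d + m - k)) := by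
    rw [hRt2 (d + m) (by omega), hΔ m]
    simp only [mul_sub]
    rw [Finset.sum_sub_distrib]
    ring
  -- replace the differences using IH / vanishing
  have h2 : ∑ k ∈ Icc 1 d, (-1 : ℂ) ^ (k + 1) * esymm d lamh k * (Rt (d + m - k) - Rh (d + m - k))
      = ∑ k ∈ Icc 1 d, (-1 : ℂ) ^ (k + 1) * esymm d lamh k *
          (if k < m then ∑ i ∈ range (m - k), cC d lamh i * Δ (m - k - i) else 0) := by
    refine Finset.sum_congr rfl fun k hk => ?_
    rw [Finset.mem_Icc] at hk
    by_cases hkm : k < m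
    · rw [if_pos hkm]
      have e : d + m - k = d + (m - k) := by omega
      rw [e, IH (m - k) (by omega) (by omega)]
    · rw [if_neg hkm, hRt1 (d + m - k) (by omega) (by omega), sub_self, mul_zero]
  -- extend to a common index set
  have h3 : ∑ k ∈ Icc 1 d, (-1 : ℂ) ^ (k + 1) * esymm d lamh k *
        (if k < m then ∑ i ∈ range (m - k), cC d lamh i * Δ (m - k - i) else 0)
      = ∑ k ∈ Icc 1 (d + m), (-1 : ℂ) ^ (k + 1) * esymm d lamh k *
        (if k < m then ∑ i ∈ range (m - k), cC d lamh i * Δ (m - k - i) else 0) := by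
    refine Finset.sum_subset (Finset.Icc_subset_Icc le_rfl (by omega)) fun x hx hnx => ?_
    rw [Finset.mem_Icc] at hx hnx
    rw [esymm_eq_zero d lamh (k := x) (by omega)]
    ring
  have h4 : ∑ k ∈ Icc 1 (m - 1), (-1 : ℂ) ^ (k + 1) * esymm d lamh k *
        (if k < m then ∑ i ∈ range (m - k), cC d lamh i * Δ (m - k - i) else 0)
      = ∑ k ∈ Icc 1 (d + m), (-1 : ℂ) ^ (k + 1) * esymm d lamh k *
        (if k < m then ∑ i ∈ range (m - k), cC d lamh i * Δ (m - k - i) else 0) := by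
    refine Finset.sum_subset (Finset.Icc_subset_Icc le_rfl (by omega)) fun x hx hnx => ?_
    rw [Finset.mem_Icc] at hx hnx
    rw [if_neg (by omega)]
    ring
  have h4' : ∑ k ∈ Icc 1 (m - 1), (-1 : ℂ) ^ (k + 1) * esymm d lamh k *
        (if k < m then ∑ i ∈ range (m - k), cC d lamh i * Δ (m - k - i) else 0)
      = ∑ k ∈ Icc 1 (m - 1), (-1 : ℂ) ^ (k + 1) * esymm d lamh k *
        (∑ i ∈ range (m - k), cC d lamh i * Δ (m - k - i)) := by
    refine Finset.sum_congr rfl fun k hk => ?_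
    rw [Finset.mem_Icc] at hk
    rw [if_pos (by omega)]
  -- the combinatorial identity: swap the double sum
  have h5 : ∑ j ∈ Icc 1 (m - 1), betaC d lamh (j - 1) 1 * Δ (m - j)
      = ∑ k ∈ Icc 1 (m - 1), (-1 : ℂ) ^ (k + 1) * esymm d lamh k *
          (∑ i ∈ range (m - k), cC d lamh i * Δ (m - k - i)) := by
    have hc : ∀ j ∈ Icc 1 (m - 1), betaC d lamh (j - 1) 1 * Δ (m - j)
        = ∑ k ∈ Icc 1 j, (-1 : ℂ) ^ (k + 1) * esymm d lamh k * cC d lamh (j - k) * Δ (m - j) := by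
      intro j hj
      rw [Finset.mem_Icc] at hj
      have hj1 : j - 1 + 1 = j := by omega
      rw [coeff_lemma d lamh (j - 1), hj1, Finset.sum_mul]
    rw [Finset.sum_congr rfl hc]
    rw [Finset.sum_comm' (s := Icc 1 (m - 1)) (t := fun j => Icc 1 j)
      (t' := Icc 1 (m - 1)) (s' := fun k => Icc k (m - 1))
      (fun j k => by simp only [Finset.mem_Icc]; omega)]
    refine Finset.sum_congr rfl fun k hk => ?_
    rw [Finset.mem_Icc] at hk
    rw [sum_Icc_eq_sum_range', Finset.mul_sum]
    have hmk : m - 1 + 1 - k = m - k := by omega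
    rw [hmk]
    refine Finset.sum_congr rfl fun i hi => ?_
    have e1 : k + i - k = i := by omega
    have e2 : m - (k + i) = m - k - i := by omega
    rw [e1, e2]
    ring
  -- assemble
  rw [h1, h2, h3, ← h4, h4', ← h5]
  -- now: Δ m + ∑ j ∈ Icc 1 (m-1), betaC (j-1) 1 * Δ (m-j) = ∑ i ∈ range m, cC i * Δ (m-i)
  obtain ⟨n, rfl⟩ : ∃ n, m = n + 1 := ⟨m - 1, by omega⟩
  rw [Finset.sum_range_succ' (fun i => cC d lamh i * Δ (n + 1 - i)) n]
  have hn1 : n + 1 - 1 = n := by omega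
  rw [hn1, sum_Icc_eq_sum_range', hn1]
  have hcong : ∀ i ∈ range n, betaC d lamh (1 + i - 1) 1 * Δ (n + 1 - (1 + i))
      = cC d lamh (i + 1) * Δ (n + 1 - (i + 1)) := by
    intro i _
    have e1 : 1 + i - 1 = i := by omega
    have e2 : n + 1 - (1 + i) = n + 1 - (i + 1) := by omega
    rw [e1, e2]
    rfl
  rw [Finset.sum_congr rfl hcong]
  simp [cC]
  ring

/-- Identity from the proof of Lemma C.4: the deviation of the extrapolated
autoregression `R̃` from the data `R̂` is expressed in terms of the residuals `Δ̂` of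
the autoregression fit. -/
theorem extrapolation_deviation_identity (d : ℕ) (hd : 1 ≤ d) (lamh : Fin d → ℂ)
    (Rh : ℕ → ℂ) (Δ : ℕ → ℂ)
    (hΔ : ∀ m : ℕ, Δ m =
      (∑ k ∈ Finset.Icc 1 d, (-1 : ℂ) ^ (k + 1) * esymm d lamh k * Rh (d + m - k)) -
        Rh (d + m))
    (Rt : ℕ → ℂ)
    (hRt1 : ∀ h : ℕ, 1 ≤ h → h ≤ d → Rt h = Rh h)
    (hRt2 : ∀ h : ℕ, d + 1 ≤ h →
      Rt h = ∑ k ∈ Finset.Icc 1 d, (-1 : ℂ) ^ (k + 1) * esymm d lamh k * Rt (h - k)) :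
    ∀ m : ℕ, 1 ≤ m → m ≤ 2 * d →
      Rt (d + m) - Rh (d + m) =
        Δ m + ∑ i ∈ Finset.Icc 1 (m - 1), betaC d lamh (i - 1) 1 * Δ (m - i) := by
  intro m hm _
  rw [key_lemma d hd lamh Rh Δ hΔ Rt hRt1 hRt2 m hm]
  obtain ⟨n, rfl⟩ : ∃ n, m = n + 1 := ⟨m - 1, by omega⟩
  rw [Finset.sum_range_succ' (fun i => cC d lamh i * Δ (n + 1 - i)) n]
  have hn1 : n + 1 - 1 = n := by omega
  rw [hn1, sum_Icc_eq_sum_range', hn1]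
  have hcong : ∀ i ∈ range n, betaC d lamh (1 + i - 1) 1 * Δ (n + 1 - (1 + i))
      = cC d lamh (i + 1) * Δ (n + 1 - (i + 1)) := by
    intro i _
    have e1 : 1 + i - 1 = i := by omega
    have e2 : n + 1 - (1 + i) = n + 1 - (i + 1) := by omega
    rw [e1, e2]
    rfl
  rw [Finset.sum_congr rfl hcong]
  simp [cC]
  ring
end

section
/- Let d ≥ 1, let λ ∈ ℂ^d satisfy |λ_k| ≤ 1 for every k, and let R_1, R_2, … ∈ ℂ satisfy R_h = Σ_{k=1}^{d} (−1)^{k+1} e_k(λ) · R_{h−k} for every integer h ≥ d+1. Let η ≥ 0 and let R̂_1, …, R̂_{3d} ∈ ℂ satisfy max_{1 ≤ h ≤ 3d} |R̂_h − R_h| ≤ η. Let λ̂ ∈ ℂ^d satisfy |λ̂_k| ≤ 1 for every k and | Σ_{k=1}^{d} (−1)^{k+1} e_k(λ̂) · R̂_{h−k} − R̂_h | ≤ 2d·4^d·η for every d+1 ≤ h ≤ 3d. Define R̃_h := R̂_h for 1 ≤ h ≤ d and R̃_h := Σ_{k=1}^{d} (−1)^{k+1} e_k(λ̂) · R̃_{h−k}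 for h ≥ d+1. Then max_{1 ≤ h ≤ 3d} |R̃_h − R_h| ≤ 2d · (64e)^d · η. -/
open Finset

open Finset Polynomial

/-- Iterated first-order difference sequences: `gseq a u j` is
`(S - a (j-1)) ⋯ (S - a 0)` applied to `u`, where `S` is the shift. -/
noncomputable def gseq (a : ℕ → ℂ) (u : ℕ → ℂ) : ℕ → ℕ → ℂ
  | 0 => u
  | (j+1) => fun h => gseq a u j (h+1) - a j * gseq a u j h

lemma gseq_eq (a u : ℕ → ℂ) (j h : ℕ) :
    gseq a u j h =
      ∑ k ∈ range (j+1), (∏ i ∈ range j, (X - C (a i))).coeff k * u (h + k) := by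
  induction j generalizing h with
  | zero => simp [gseq]
  | succ j ih =>
    have hdeg : (∏ i ∈ range j, (X - C (a i))).natDegree ≤ j := by
      refine le_trans (natDegree_prod_le _ _) ?_
      simp [natDegree_X_sub_C]
    set p := ∏ i ∈ range j, (X - C (a i)) with hp
    have hprod : ∏ i ∈ range (j+1), (X - C (a i)) = p * (X - C (a j)) :=
      Finset.prod_range_succ _ _
    have hcoeff : ∀ k, (p * (X - C (a j))).coeff k =
        (p * X).coeff k - a j * p.coeff k := by
      intro k
      rw [mul_sub, coeff_sub, mul_comm p (C (a j)), coeff_C_mul]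
    have e1 : ∑ k ∈ range (j+1+1), (p * X).coeff k * u (h + k)
        = ∑ k ∈ range (j+1), p.coeff k * u (h + 1 + k) := by
      rw [Finset.sum_range_succ']
      simp only [coeff_mul_X, coeff_mul_X_zero, zero_mul, add_zero]
      refine Finset.sum_congr rfl fun k _ => ?_
      congr 2
      omega
    have e2 : ∑ k ∈ range (j+1+1), p.coeff k * u (h + k)
        = ∑ k ∈ range (j+1), p.coeff k * u (h + k) := by
      rw [Finset.sum_range_succ]
      have hz : p.coeff (j+1) = 0 :=
        coeff_eq_zero_of_natDegree_lt (lt_of_le_of_lt hdeg (by omega))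
      simp [hz]
    have key : ∑ k ∈ range (j+1+1), (∏ i ∈ range (j+1), (X - C (a i))).coeff k * u (h + k)
        = ∑ k ∈ range (j+1), p.coeff k * u (h + 1 + k)
          - a j * ∑ k ∈ range (j+1), p.coeff k * u (h + k) := by
      calc ∑ k ∈ range (j+1+1), (∏ i ∈ range (j+1), (X - C (a i))).coeff k * u (h + k)
          = ∑ k ∈ range (j+1+1), ((p * X).coeff k * u (h + k)
              - a j * (p.coeff k * u (h + k))) := by
            rw [hprod]
            refine Finset.sum_congr rfl fun k _ => ?_
            rw [hcoeff]; ring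
        _ = ∑ k ∈ range (j+1+1), (p * X).coeff k * u (h + k)
            - a j * ∑ k ∈ range (j+1+1), p.coeff k * u (h + k) := by
            rw [Finset.sum_sub_distrib, Finset.mul_sum]
        _ = ∑ k ∈ range (j+1), p.coeff k * u (h + 1 + k)
            - a j * ∑ k ∈ range (j+1), p.coeff k * u (h + k) := by rw [e1, e2]
    rw [key]
    show gseq a u j (h+1) - a j * gseq a u j h = _
    rw [ih, ih]

lemma gseq_zero (a u : ℕ → ℂ) (d : ℕ) (hu : ∀ h, 1 ≤ h → h ≤ d → u h = 0) :
    ∀ j h, 1 ≤ h → h + j ≤ d → gseq a u j h = 0 := by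
  intro j
  induction j with
  | zero => intro h h1 h2; exact hu h h1 (by omega)
  | succ j ih =>
    intro h h1 h2
    show gseq a u j (h+1) - a j * gseq a u j h = 0
    rw [ih (h+1) (by omega) (by omega), ih h h1 (by omega)]
    ring

lemma choose_le_two_pow (n k : ℕ) : n.choose k ≤ 2 ^ n := by
  rcases le_or_gt k n with hk | hk
  · calc n.choose k ≤ ∑ i ∈ range (n+1), n.choose i :=
        Finset.single_le_sum (f := fun i => n.choose i) (fun _ _ => Nat.zero_le _)
          (Finset.mem_range.mpr (by omega))
    _ = 2 ^ n := Nat.sum_range_choose n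
  · rw [Nat.choose_eq_zero_of_lt hk]; exact Nat.zero_le _

lemma pow_128_lemma : ∀ d : ℕ, 1 ≤ d → (128:ℝ)^d + 1 ≤ (64 * Real.exp 1)^d := by
  intro d hd
  induction d with
  | zero => omega
  | succ n ih =>
    rcases Nat.eq_zero_or_pos n with hn | hn
    · subst hn
      have := Real.exp_one_gt_d9
      norm_num
      nlinarith
    · have h1 := ih hn
      have h2 : (128:ℝ) ≤ 64 * Real.exp 1 := by
        have := Real.exp_one_gt_d9; nlinarith
      have h3 : (0:ℝ) ≤ (64 * Real.exp 1)^n := by positivity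
      calc (128:ℝ)^(n+1) + 1 ≤ 128 * ((128:ℝ)^n + 1) := by
            rw [pow_succ]; nlinarith [pow_nonneg (by norm_num : (0:ℝ) ≤ 128) n]
        _ ≤ 128 * (64 * Real.exp 1)^n := by nlinarith
        _ ≤ (64 * Real.exp 1)^(n+1) := by rw [pow_succ]; nlinarith

lemma gseq_bound (a u : ℕ → ℂ) (d : ℕ) (B : ℝ) (hB : 0 ≤ B)
    (ha : ∀ i, ‖a i‖ ≤ 1)
    (hzero : ∀ j h, 1 ≤ h → h + j ≤ d → gseq a u j h = 0)
    (hend : ∀ m, 1 ≤ m → m ≤ 2*d → ‖gseq a u d m‖ ≤ B) :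
    ∀ i, i ≤ d → ∀ h, 1 ≤ h → h ≤ 2*d + i →
      ‖gseq a u (d - i) h‖ ≤ B * ((h + 2*d).choose i) := by
  intro i
  induction i with
  | zero =>
    intro _ h h1 h2
    simpa using hend h h1 (by omega)
  | succ i ih =>
    intro hi
    have hdj : d - i = (d - (i+1)) + 1 := by omega
    set j := d - (i+1) with hj
    intro h
    induction h with
    | zero => intro h1 _; omega
    | succ h ihh =>
      intro _ h2
      rcases Nat.eq_zero_or_pos h with h0 | h0
      · subst h0
        rw [hzero j 1 (by omega) (by omega)]
        simp only [norm_zero]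
        positivity
      · have step : gseq a u j (h+1) = gseq a u (j+1) h + a j * gseq a u j h := by
          show gseq a u j (h+1) = (gseq a u j (h+1) - a j * gseq a u j h) + a j * gseq a u j h
          ring
        have houter : ‖gseq a u (j+1) h‖ ≤ B * ((h + 2*d).choose i) := by
          rw [← hdj]
          exact ih (by omega) h h0 (by omega)
        have hinner : ‖gseq a u j h‖ ≤ B * ((h + 2*d).choose (i+1)) :=
          ihh h0 (by omega)
        have habs : ‖gseq a u j (h+1)‖ ≤
            ‖gseq a u (j+1) h‖ + ‖a j‖ * ‖gseq a u j h‖ := by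
          rw [step]
          refine le_trans (norm_add_le _ _) ?_
          rw [norm_mul]
        have hle : ‖a j‖ * ‖gseq a u j h‖
            ≤ ‖gseq a u j h‖ := by
          have := norm_nonneg (gseq a u j h)
          nlinarith [ha j]
        have pascal : ((h + 1 + 2*d).choose (i+1) : ℝ)
            = ((h + 2*d).choose i : ℝ) + ((h + 2*d).choose (i+1) : ℝ) := by
          have : (h + 1 + 2*d) = (h + 2*d) + 1 := by omega
          rw [this]
          rw [Nat.choose_succ_succ]
          push_cast
          ring
        calc ‖gseq a u j (h+1)‖
            ≤ ‖gseq a u (j+1) h‖ + ‖gseq a u j h‖ := by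
              refine le_trans habs (by linarith)
          _ ≤ B * ((h + 2*d).choose i) + B * ((h + 2*d).choose (i+1)) := by
              linarith
          _ = B * ((h + 1 + 2*d).choose (i+1)) := by rw [pascal]; ring

/-- Part (b) of Lemma C.4 (initial-conditions lemma): any eigenvalue vector `λ̂`
feasible for the optimization problem yields extrapolated values `R̃` that approximate
the true sequence `R` on the first `3d` steps. -/
theorem extrapolation_initial_error_bound (d : ℕ) (hd : 1 ≤ d) (lam : Fin d → ℂ)
    (hlam : ∀ k, ‖lam k‖ ≤ 1) (R : ℕ → ℂ)
    (hR : ∀ h : ℕ, d + 1 ≤ h →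
      R h = ∑ k ∈ Finset.Icc 1 d, (-1 : ℂ) ^ (k + 1) * esymm d lam k * R (h - k))
    (η : ℝ) (hη : 0 ≤ η) (Rh : ℕ → ℂ)
    (hRh : ∀ h : ℕ, 1 ≤ h → h ≤ 3 * d → ‖Rh h - R h‖ ≤ η)
    (lamh : Fin d → ℂ) (hlamh : ∀ k, ‖lamh k‖ ≤ 1)
    (hfeas : ∀ h : ℕ, d + 1 ≤ h → h ≤ 3 * d →
      ‖(∑ k ∈ Finset.Icc 1 d, (-1 : ℂ) ^ (k + 1) * esymm d lamh k * Rh (h - k)) -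
            Rh h‖ ≤
        2 * (d : ℝ) * 4 ^ d * η)
    (Rt : ℕ → ℂ)
    (hRt1 : ∀ h : ℕ, 1 ≤ h → h ≤ d → Rt h = Rh h)
    (hRt2 : ∀ h : ℕ, d + 1 ≤ h →
      Rt h = ∑ k ∈ Finset.Icc 1 d, (-1 : ℂ) ^ (k + 1) * esymm d lamh k * Rt (h - k)) :
    ∀ h : ℕ, 1 ≤ h → h ≤ 3 * d →
      ‖Rt h - R h‖ ≤ 2 * (d : ℝ) * (64 * Real.exp 1) ^ d * η := by
  classical
  set B : ℝ := 2 * (d : ℝ) * 4 ^ d * η with hBdef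
  have hB : 0 ≤ B := by positivity
  set u : ℕ → ℂ := fun m => Rt m - Rh m with hu
  set a : ℕ → ℂ := fun i => if hi : i < d then lamh ⟨i, hi⟩ else 0 with ha
  have ha1 : ∀ i, ‖a i‖ ≤ 1 := by
    intro i
    simp only [ha]
    split
    · exact hlamh _
    · simp
  -- identify the product of linear factors
  have hprod : (∏ i ∈ range d, (X - C (a i))) = ∏ i : Fin d, (X - C (lamh i)) := by
    rw [← Fin.prod_univ_eq_prod_range (fun i => (X - C (a i))) d]
    refine Finset.prod_congr rfl fun i _ => ?_
    simp only [ha, i.isLt, dif_pos, Fin.eta]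
  -- Vieta
  have hcoeffk : ∀ k, k ≤ d →
      (∏ i : Fin d, (X - C (lamh i))).coeff k = (-1) ^ (d - k) * esymm d lamh (d - k) := by
    intro k hk
    set s : Multiset ℂ := (Finset.univ : Finset (Fin d)).val.map lamh with hs
    have hcard : Multiset.card s = d := by simp [hs]
    have h1 : (s.map fun t => X - C t).prod = ∏ i : Fin d, (X - C (lamh i)) := by
      rw [hs, Multiset.map_map]
      rfl
    have h2 := Multiset.prod_X_sub_C_coeff s (k := k) (by omega)
    rw [h1, hcard] at h2
    rw [h2]
    congr 1
    rw [hs, Finset.esymm_map_val]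
    rfl
  -- the forcing term
  have hforce : ∀ h : ℕ, d + 1 ≤ h → gseq a u d (h - d) =
      (∑ k ∈ Finset.Icc 1 d, (-1 : ℂ) ^ (k + 1) * esymm d lamh k * Rh (h - k)) - Rh h := by
    intro h hh
    have step1 : gseq a u d (h - d)
        = ∑ k ∈ range (d+1), (-1 : ℂ) ^ (d - k) * esymm d lamh (d - k) * u (h - d + k) := by
      rw [gseq_eq]
      refine Finset.sum_congr rfl fun k hk => ?_
      rw [hprod, hcoeffk k (by simpa using Nat.lt_succ_iff.mp (Finset.mem_range.mp hk))]
    have step2 : ∑ k ∈ range (d+1), (-1 : ℂ) ^ (d - k) * esymm d lamh (d - k) * u (h - d + k)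
        = ∑ m ∈ range (d+1), (-1 : ℂ) ^ m * esymm d lamh m * u (h - m) := by
      rw [← Finset.sum_range_reflect]
      refine Finset.sum_congr rfl fun m hm => ?_
      have hm' : m ≤ d := by simpa using Nat.lt_succ_iff.mp (Finset.mem_range.mp hm)
      have e1 : d + 1 - 1 - m = d - m := by omega
      have e2 : d - (d - m) = m := by omega
      have e3 : h - d + (d - m) = h - m := by omega
      rw [e1, e2, e3]
    have step3 : ∑ m ∈ range (d+1), (-1 : ℂ) ^ m * esymm d lamh m * u (h - m)
        = u h - ∑ m ∈ Finset.Icc 1 d, (-1 : ℂ) ^ (m+1) * esymm d lamh m * u (h - m) := by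
      rw [Finset.sum_range_succ']
      have h0 : (-1 : ℂ) ^ 0 * esymm d lamh 0 * u (h - 0) = u h := by
        simp [esymm]
      rw [h0]
      have h1 : ∑ m ∈ Finset.Icc 1 d, (-1 : ℂ) ^ (m+1) * esymm d lamh m * u (h - m)
          = ∑ m ∈ range d, (-1 : ℂ) ^ (m+1+1) * esymm d lamh (m+1) * u (h - (m+1)) := by
        rw [← Finset.Ico_add_one_right_eq_Icc, Finset.sum_Ico_eq_sum_range]
        have hde : d + 1 - 1 = d := by omega
        rw [hde]
        refine Finset.sum_congr rfl fun m _ => ?_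
        have h1m : 1 + m = m + 1 := by omega
        rw [h1m]
      rw [h1]
      have h4 : ∑ m ∈ range d, (-1 : ℂ) ^ (m+1+1) * esymm d lamh (m+1) * u (h - (m+1))
          = -∑ m ∈ range d, (-1 : ℂ) ^ (m+1) * esymm d lamh (m+1) * u (h - (m+1)) := by
        rw [← Finset.sum_neg_distrib]
        refine Finset.sum_congr rfl fun m _ => ?_
        rw [pow_succ]
        ring
      rw [h4]
      ring
    rw [step1, step2, step3]
    have expand : ∑ m ∈ Finset.Icc 1 d, (-1 : ℂ) ^ (m+1) * esymm d lamh m * u (h - m)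
        = ∑ m ∈ Finset.Icc 1 d, (-1 : ℂ) ^ (m+1) * esymm d lamh m * Rt (h - m)
          - ∑ m ∈ Finset.Icc 1 d, (-1 : ℂ) ^ (m+1) * esymm d lamh m * Rh (h - m) := by
      rw [← Finset.sum_sub_distrib]
      refine Finset.sum_congr rfl fun m _ => ?_
      simp only [hu]
      ring
    rw [expand]
    simp only [hu]
    rw [hRt2 h hh]
    ring
  -- bound on the forcing term
  have hfbound : ∀ m, 1 ≤ m → m ≤ 2*d → ‖gseq a u d m‖ ≤ B := by
    intro m hm1 hm2
    have e : (m + d) - d = m := by omega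
    have := hforce (m + d) (by omega)
    rw [e] at this
    rw [this]
    exact hfeas (m + d) (by omega) (by omega)
  -- zero initial conditions
  have hzero : ∀ j h, 1 ≤ h → h + j ≤ d → gseq a u j h = 0 := by
    refine gseq_zero a u d fun h h1 h2 => ?_
    simp only [hu]
    rw [hRt1 h h1 h2]
    ring
  -- conclude
  intro h h1 h3
  have hmain := gseq_bound a u d B hB ha1 hzero hfbound d le_rfl h h1 (by omega)
  have hdd : d - d = 0 := by omega
  rw [hdd] at hmain
  have hu0 : gseq a u 0 h = u h := rfl
  rw [hu0] at hmain
  have htri : ‖Rt h - R h‖ ≤ ‖u h‖ + ‖Rh h - R h‖ := by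
    have : Rt h - R h = u h + (Rh h - R h) := by simp only [hu]; ring
    rw [this]
    exact norm_add_le _ _
  have hchoose : ((h + 2*d).choose d : ℝ) ≤ (32 : ℝ) ^ d := by
    have c1 : (h + 2*d).choose d ≤ (5*d).choose d := Nat.choose_le_choose d (by omega)
    have c2 : (5*d).choose d ≤ 2 ^ (5*d) := choose_le_two_pow _ _
    have c3 : (2:ℕ) ^ (5*d) = 32 ^ d := by
      rw [pow_mul]
      norm_num
    calc ((h + 2*d).choose d : ℝ) ≤ ((2:ℕ) ^ (5*d) : ℕ) := by exact_mod_cast le_trans c1 c2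
      _ = (32 : ℝ) ^ d := by rw [c3]; push_cast; ring
  have habsu : ‖u h‖ ≤ B * (32 : ℝ) ^ d := by
    refine le_trans hmain ?_
    exact mul_le_mul_of_nonneg_left hchoose hB
  have hRhR : ‖Rh h - R h‖ ≤ η := hRh h h1 h3
  have key : B * (32 : ℝ) ^ d + η ≤ 2 * (d : ℝ) * (64 * Real.exp 1) ^ d * η := by
    have hp := pow_128_lemma d hd
    have hd2 : (2 : ℝ) ≤ 2 * (d : ℝ) := by
      have : (1:ℝ) ≤ (d:ℝ) := by exact_mod_cast hd
      linarith
    have e1 : B * (32:ℝ)^d = 2 * (d:ℝ) * 128^d * η := by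
      rw [hBdef]
      rw [show (128:ℝ)^d = 4^d * 32^d by rw [← mul_pow]; norm_num]
      ring
    rw [e1]
    have e2 : 2 * (d:ℝ) * 128^d * η + η ≤ 2 * (d:ℝ) * (128^d + 1) * η := by
      have : (1:ℝ) * η ≤ 2 * (d:ℝ) * η := by nlinarith
      nlinarith
    refine le_trans e2 ?_
    have : 2 * (d:ℝ) * (128^d + 1) ≤ 2 * (d:ℝ) * (64 * Real.exp 1)^d := by
      have hd0 : (0:ℝ) ≤ 2 * (d:ℝ) := by positivity
      exact mul_le_mul_of_nonneg_left hp hd0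
    nlinarith
  linarith
end

section
/- Let p ∈ [0,1] and let d, h be integers with 1 ≤ d ≤ h. Then Σ_{i=d}^{h} ((i−1) choose (d−1)) · p^{d−1} · (1−p)^{i−d} ≤ (h−d+1) · (2·p·e·h/d)^{d−1}. -/
open Finset

/-- Lemma F.7 (`G_lb`): bound on the probability that a negative-binomial random
variable (first time `d−1` successes occur among Bernoulli(`p`) trials) is at most `h`. -/
theorem negative_binomial_tail_bound (p : ℝ) (hp0 : 0 ≤ p) (hp1 : p ≤ 1)
    (d h : ℕ) (hd : 1 ≤ d) (hdh : d ≤ h) :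
    ∑ i ∈ Finset.Icc d h, ((i - 1).choose (d - 1) : ℝ) * p ^ (d - 1) * (1 - p) ^ (i - d) ≤
      ((h - d + 1 : ℕ) : ℝ) * (2 * p * Real.exp 1 * (h : ℝ) / (d : ℝ)) ^ (d - 1) := by
  set k := d - 1 with hk
  set C := (2 * p * Real.exp 1 * (h : ℝ) / (d : ℝ)) ^ k with hC
  have h1p : 0 ≤ 1 - p := by linarith
  have hdR : (0:ℝ) < d := by exact_mod_cast hd
  have hCnn : 0 ≤ C := by
    apply pow_nonneg
    positivity
  have key : ∀ i ∈ Finset.Icc d h,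
      ((i - 1).choose k : ℝ) * p ^ k * (1 - p) ^ (i - d) ≤ C := by
    intro i hi
    obtain ⟨hdi, hih⟩ := Finset.mem_Icc.mp hi
    have step1 : ((i - 1).choose k : ℝ) * p ^ k * (1 - p) ^ (i - d)
        ≤ ((h - 1).choose k : ℝ) * p ^ k := by
      calc ((i - 1).choose k : ℝ) * p ^ k * (1 - p) ^ (i - d)
          ≤ ((i - 1).choose k : ℝ) * p ^ k * 1 := by
            apply mul_le_mul_of_nonneg_left (pow_le_one₀ h1p (by linarith)) (by positivity)
        _ = ((i - 1).choose k : ℝ) * p ^ k := by ring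
        _ ≤ ((h - 1).choose k : ℝ) * p ^ k := by
            gcongr
    refine step1.trans ?_
    rcases Nat.eq_zero_or_pos k with hk0 | hkpos
    · simp [hC, hk0]
    · have hkR : (0:ℝ) < k := by exact_mod_cast hkpos
      have hfac : (0:ℝ) < (Nat.factorial k : ℝ) := by exact_mod_cast Nat.factorial_pos k
      have e1 : (((h - 1).choose k : ℕ) : ℝ) ≤ ((h-1 : ℕ) : ℝ) ^ k / (Nat.factorial k : ℝ) :=
        Nat.choose_le_pow_div k (h - 1)
      have e2 : (k:ℝ) ^ k / (Nat.factorial k : ℝ) ≤ Real.exp 1 ^ k := by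
        have h2 := Real.pow_div_factorial_le_exp (x := (k:ℝ)) (by positivity) k
        rw [show Real.exp 1 ^ k = Real.exp (k:ℝ) by rw [← Real.exp_nat_mul, mul_one]]
        exact h2
      have hinv : (1:ℝ) / (Nat.factorial k : ℝ) ≤ Real.exp 1 ^ k / (k:ℝ) ^ k := by
        rw [div_le_div_iff₀ hfac (by positivity : (0:ℝ) < (k:ℝ) ^ k)]
        have h3 := e2
        rw [div_le_iff₀ hfac] at h3
        linarith
      have hbase : ((h-1 : ℕ) : ℝ) * Real.exp 1 * p / (k:ℝ) ≤ 2 * p * Real.exp 1 * h / d := by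
        have hnat : (h - 1) * d ≤ 2 * h * k := by
          have hdk : d = k + 1 := by omega
          have hh1 : h - 1 + 1 = h := by omega
          nlinarith [Nat.sub_le h 1, hkpos, hdh, hh1]
        have hcast : ((h-1:ℕ):ℝ) * d ≤ 2 * h * k := by exact_mod_cast hnat
        rw [div_le_div_iff₀ hkR hdR]
        nlinarith [Real.exp_pos 1, Real.exp_pos 1 |>.le, mul_nonneg hp0 (Real.exp_pos 1).le]
      calc ((h - 1).choose k : ℝ) * p ^ k
          ≤ (((h-1:ℕ):ℝ) ^ k / (Nat.factorial k : ℝ)) * p ^ k := by gcongr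
        _ = ((h-1:ℕ):ℝ) ^ k * (1 / (Nat.factorial k : ℝ)) * p ^ k := by ring
        _ ≤ ((h-1:ℕ):ℝ) ^ k * (Real.exp 1 ^ k / (k:ℝ) ^ k) * p ^ k := by
            gcongr
        _ = (((h-1:ℕ):ℝ) * Real.exp 1 * p / (k:ℝ)) ^ k := by
            rw [div_pow, mul_pow, mul_pow]
            ring
        _ ≤ (2 * p * Real.exp 1 * h / d) ^ k := by
            apply pow_le_pow_left₀ (by positivity) hbase
  calc ∑ i ∈ Finset.Icc d h, ((i - 1).choose k : ℝ) * p ^ k * (1 - p) ^ (i - d)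
      ≤ ∑ _i ∈ Finset.Icc d h, C := Finset.sum_le_sum key
    _ = ((Finset.Icc d h).card : ℝ) * C := by rw [Finset.sum_const, nsmul_eq_mul]
    _ = ((h - d + 1 : ℕ) : ℝ) * C := by
        rw [Nat.card_Icc]
        congr 1
        exact_mod_cast congrArg Nat.cast (by omega : h + 1 - d = h - d + 1)
end
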